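/- arXiv:1406.3257 — 3 statements merged into one kernel-verified Lean document; each statement's English description precedes it below -/
import Mathlib

section
/- For every s > 0: the s-dimensional lower quantization coefficient Q̲_r^s(μ) is positive if and only if liminf_{j→∞} φ_{j,r}^{r/s} e_{φ_{j,r},r}(μ)^r > 0; and the s-dimensional upper quantization coefficient Q̄_r^s(μ) is finite if and only if limsup_{j→∞} φ_{j,r}^{r/s} e_{φ_{j,r},r}(μ)^r < ∞. -/
open Filter MeasureTheory
open scoped ENNReal

namespace QM

/-- A finite word is admissible w.r.t. `P` if consecutive transition probabilities
are positive. -/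
def Adm {N : ℕ} (P : Matrix (Fin N) (Fin N) ℝ) (σ : List (Fin N)) : Prop :=
  List.Chain' (fun a b => 0 < P a b) σ

/-- An infinite word is admissible if all consecutive transition probabilities are positive. -/
def AdmInf {N : ℕ} (P : Matrix (Fin N) (Fin N) ℝ) (τ : ℕ → Fin N) : Prop :=
  ∀ h : ℕ, 0 < P (τ h) (τ (h + 1))

/-- `wprod M σ = M σ₁ σ₂ * ⋯ * M σ_{k-1} σ_k`; equals `1` when `σ` has length at most 1. -/
noncomputable def wprod {N : ℕ} (M : Matrix (Fin N) (Fin N) ℝ) (σ : List (Fin N)) : ℝ :=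
  ((σ.zip σ.tail).map fun x => M x.1 x.2).prod

/-- Spectral radius of a real square matrix: the largest modulus of a complex eigenvalue. -/
noncomputable def specRad {ι : Type} [Fintype ι] [DecidableEq ι] (A : Matrix ι ι ℝ) : ℝ :=
  sSup {x : ℝ | ∃ z : ℂ,
    Module.End.HasEigenvalue (Matrix.toLin' (A.map (fun t => (t : ℂ)))) z ∧ x = ‖z‖}

/-- The matrix `A_{G,s}` with entries `(p_{ij} c_{ij}^r)^{s/(s+r)}` (zero when `p_{ij} = 0`). -/
noncomputable def AGs {N : ℕ} (P c : Matrix (Fin N) (Fin N) ℝ) (r s : ℝ) :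
    Matrix (Fin N) (Fin N) ℝ :=
  Matrix.of fun i j => if 0 < P i j then (P i j * c i j ^ r) ^ (s / (s + r)) else 0

/-- `Ψ_G(s)`, the spectral radius of `A_{G,s}`. -/
noncomputable def PsiG {N : ℕ} (P c : Matrix (Fin N) (Fin N) ℝ) (r s : ℝ) : ℝ :=
  specRad (AGs P c r s)

/-- The submatrix of `A_{G,s}` with rows and columns in `H`. -/
noncomputable def AHs {N : ℕ} (P c : Matrix (Fin N) (Fin N) ℝ) (r s : ℝ)
    (H : Finset (Fin N)) : Matrix {i // i ∈ H} {i // i ∈ H} ℝ :=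
  Matrix.of fun i j => AGs P c r s i.1 j.1

/-- `Ψ_H(s)`, the spectral radius of `A_{H,s}`. -/
noncomputable def PsiH {N : ℕ} (P c : Matrix (Fin N) (Fin N) ℝ) (r s : ℝ)
    (H : Finset (Fin N)) : ℝ :=
  specRad (AHs P c r s H)

/-- Edge relation of the directed graph `G` associated with `P`. -/
def Edge {N : ℕ} (P : Matrix (Fin N) (Fin N) ℝ) (i j : Fin N) : Prop := 0 < P i j

/-- Reachability along directed paths all of whose vertices lie in `S`. -/
def ReachIn {N : ℕ} (P : Matrix (Fin N) (Fin N) ℝ) (S : Set (Fin N)) (i j : Fin N) : Prop :=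
  Relation.ReflTransGen (fun a b => Edge P a b ∧ a ∈ S ∧ b ∈ S) i j

/-- A set of vertices is strongly connected (with the inherited edges). -/
def StrConn {N : ℕ} (P : Matrix (Fin N) (Fin N) ℝ) (S : Set (Fin N)) : Prop :=
  ∀ i ∈ S, ∀ j ∈ S, ReachIn P S i j

/-- `H` is a strongly connected component of `G` containing at least one edge. -/
def IsSCC {N : ℕ} (P : Matrix (Fin N) (Fin N) ℝ) (H : Finset (Fin N)) : Prop :=
  StrConn P ↑H ∧ (∀ S : Finset (Fin N), H ⊆ S → StrConn P ↑S → S = H) ∧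
    ∃ i ∈ H, ∃ j ∈ H, Edge P i j

/-- `H₁ ≺ H₂` : some vertex of `H₂` can be reached from some vertex of `H₁` by a
directed path in `G`. -/
def Prec {N : ℕ} (P : Matrix (Fin N) (Fin N) ℝ) (H₁ H₂ : Finset (Fin N)) : Prop :=
  ∃ i ∈ H₁, ∃ j ∈ H₂, Relation.ReflTransGen (Edge P) i j

/-- Irreducibility of `P` : the graph `G` is strongly connected. -/
def Irred {N : ℕ} (P : Matrix (Fin N) (Fin N) ℝ) : Prop :=
  ∀ i j : Fin N, Relation.TransGen (Edge P) i j

/-- `Γ` is a finite maximal antichain in `Ω^*`. -/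
def IsMaxAntichain {N : ℕ} (P : Matrix (Fin N) (Fin N) ℝ) (Γ : Finset (List (Fin N))) : Prop :=
  (∀ σ ∈ Γ, σ ≠ [] ∧ Adm P σ) ∧
    (∀ σ ∈ Γ, ∀ ω ∈ Γ, σ ≠ ω → ¬ σ <+: ω) ∧
    ∀ τ : ℕ → Fin N, AdmInf P τ → ∃ k : ℕ, 0 < k ∧ (List.range k).map τ ∈ Γ

/-- `Γ` is a finite maximal antichain in `H^*`. -/
def IsMaxAntichainIn {N : ℕ} (P : Matrix (Fin N) (Fin N) ℝ) (H : Finset (Fin N))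
    (Γ : Finset (List (Fin N))) : Prop :=
  (∀ σ ∈ Γ, σ ≠ [] ∧ Adm P σ ∧ ∀ a ∈ σ, a ∈ H) ∧
    (∀ σ ∈ Γ, ∀ ω ∈ Γ, σ ≠ ω → ¬ σ <+: ω) ∧
    ∀ τ : ℕ → Fin N, AdmInf P τ → (∀ h, τ h ∈ H) → ∃ k : ℕ, 0 < k ∧ (List.range k).map τ ∈ Γ

/-- `Γ` is a finite maximal antichain in `H^*(i)`. -/
def IsMaxAntichainInAt {N : ℕ} (P : Matrix (Fin N) (Fin N) ℝ) (H : Finset (Fin N)) (i : Fin N)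
    (Γ : Finset (List (Fin N))) : Prop :=
  (∀ σ ∈ Γ, σ ≠ [] ∧ Adm P σ ∧ (∀ a ∈ σ, a ∈ H) ∧ σ.head? = some i) ∧
    (∀ σ ∈ Γ, ∀ ω ∈ Γ, σ ≠ ω → ¬ σ <+: ω) ∧
    ∀ τ : ℕ → Fin N, AdmInf P τ → (∀ h, τ h ∈ H) → τ 0 = i →
      ∃ k : ℕ, 0 < k ∧ (List.range k).map τ ∈ Γ

/-- The `n`-th quantization error of order `r` for a measure on `ℝ^q`. -/
noncomputable def quantErr {q : ℕ} (ν : Measure (EuclideanSpace ℝ (Fin q))) (r : ℝ)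
    (n : ℕ) : ℝ :=
  sInf {e : ℝ | ∃ α : Finset (EuclideanSpace ℝ (Fin q)), α.Nonempty ∧ α.card ≤ n ∧
    e = (∫ x, Metric.infDist x (↑α : Set (EuclideanSpace ℝ (Fin q))) ^ r ∂ν) ^ (1 / r)}

/-- The `s`-dimensional upper quantization coefficient of order `r`,
`limsup_n n^{r/s} e_{n,r}^r`. -/
noncomputable def upperQCoeff {q : ℕ} (ν : Measure (EuclideanSpace ℝ (Fin q)))
    (r s : ℝ) : ℝ≥0∞ :=
  Filter.limsup (fun n : ℕ => ENNReal.ofReal ((n : ℝ) ^ (r / s) * quantErr ν r n ^ r))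
    Filter.atTop

/-- The `s`-dimensional lower quantization coefficient of order `r`,
`liminf_n n^{r/s} e_{n,r}^r`. -/
noncomputable def lowerQCoeff {q : ℕ} (ν : Measure (EuclideanSpace ℝ (Fin q)))
    (r s : ℝ) : ℝ≥0∞ :=
  Filter.liminf (fun n : ℕ => ENNReal.ofReal ((n : ℝ) ^ (r / s) * quantErr ν r n ^ r))
    Filter.atTop

/-- The upper quantization dimension of order `r`. -/
noncomputable def upperQDim {q : ℕ} (ν : Measure (EuclideanSpace ℝ (Fin q))) (r : ℝ) : ℝ :=
  Filter.limsup (fun n : ℕ => Real.log n / (- Real.log (quantErr ν r n))) Filter.atTop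

/-- The lower quantization dimension of order `r`. -/
noncomputable def lowerQDim {q : ℕ} (ν : Measure (EuclideanSpace ℝ (Fin q))) (r : ℝ) : ℝ :=
  Filter.liminf (fun n : ℕ => Real.log n / (- Real.log (quantErr ν r n))) Filter.atTop

/-- `η = min {p_{ij} c_{ij}^r : p_{ij} > 0}`. -/
noncomputable def eta {N : ℕ} (P c : Matrix (Fin N) (Fin N) ℝ) (r : ℝ) : ℝ :=
  sInf {x : ℝ | ∃ i j, 0 < P i j ∧ x = P i j * c i j ^ r}

/-- The finite maximal antichain `Λ_{j,r}`. -/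
def Lambda {N : ℕ} (P c : Matrix (Fin N) (Fin N) ℝ) (r : ℝ) (j : ℕ) : Set (List (Fin N)) :=
  {σ | σ ≠ [] ∧ Adm P σ ∧
    eta P c r ^ j ≤ wprod P σ.dropLast * wprod c σ.dropLast ^ r ∧
    wprod P σ * wprod c σ ^ r < eta P c r ^ j}

/-- `φ_{j,r}`, the cardinality of `Λ_{j,r}`. -/
noncomputable def phi {N : ℕ} (P c : Matrix (Fin N) (Fin N) ℝ) (r : ℝ) (j : ℕ) : ℕ :=
  (Lambda P c r j).ncard

end QM

open Filter MeasureTheory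
open scoped ENNReal

namespace QAux
open QM

variable {N : ℕ} (P c : Matrix (Fin N) (Fin N) ℝ) (r : ℝ)

/-- per-edge weight -/
noncomputable def wt (i j : Fin N) : ℝ := P i j * c i j ^ r

/-- product of weights along a word -/
noncomputable def gg (σ : List (Fin N)) : ℝ :=
  ((σ.zip σ.tail).map fun x => wt P c r x.1 x.2).prod

/-- set of weights of positive edges -/
def edgeWts : Set ℝ := {x : ℝ | ∃ i j, 0 < P i j ∧ x = P i j * c i j ^ r}

noncomputable def rho : ℝ := sSup (edgeWts P c r)

variable {P c r}

lemma edgeWts_finite : (edgeWts P c r).Finite := by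
  have : edgeWts P c r ⊆ (fun p : Fin N × Fin N => P p.1 p.2 * c p.1 p.2 ^ r) '' Set.univ := by
    rintro x ⟨i, j, _, rfl⟩; exact ⟨(i, j), trivial, rfl⟩
  exact (Set.finite_univ.image _).subset this

section
variable (hN : 2 ≤ N) (hr : 0 < r) (hP0 : ∀ i j, 0 ≤ P i j)
  (hProw : ∀ i, ∑ j, P i j = 1)
  (hPcard : ∀ i : Fin N, 2 ≤ {j : Fin N | 0 < P i j}.ncard)
  (hc1 : ∀ i j, 0 < P i j → 0 < c i j ∧ c i j < 1)

include hPcard in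
lemma exists_succ (i : Fin N) : ∃ j, 0 < P i j := by
  have h := hPcard i
  have hfin : {j : Fin N | 0 < P i j}.Finite := Set.toFinite _
  rcases (Set.one_lt_ncard_iff hfin).mp (by omega) with ⟨a, b, ha, hb, hab⟩
  exact ⟨a, ha⟩

include hPcard in
lemma exists_two_succ (i : Fin N) : ∃ a b, 0 < P i a ∧ 0 < P i b ∧ a ≠ b := by
  have hfin : {j : Fin N | 0 < P i j}.Finite := Set.toFinite _
  rcases (Set.one_lt_ncard_iff hfin).mp (by have := hPcard i; omega) with ⟨a, b, ha, hb, hab⟩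
  exact ⟨a, b, ha, hb, hab⟩

include hN hPcard in
lemma edgeWts_nonempty : (edgeWts P c r).Nonempty := by
  have : (0 : ℕ) < N := by omega
  obtain ⟨j, hj⟩ := exists_succ hPcard (⟨0, this⟩ : Fin N)
  exact ⟨_, ⟨_, j, hj, rfl⟩⟩

include hP0 hProw in
lemma P_le_one (i j : Fin N) : P i j ≤ 1 := by
  have := Finset.single_le_sum (f := fun j => P i j) (fun k _ => hP0 i k)
    (Finset.mem_univ j)
  rw [hProw i] at this; exact this

include hr hc1 in
lemma wt_pos {i j : Fin N} (h : 0 < P i j) : 0 < wt P c r i j :=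
  mul_pos h (Real.rpow_pos_of_pos (hc1 i j h).1 r)

include hr hP0 hProw hc1 in
lemma wt_lt_one {i j : Fin N} (h : 0 < P i j) : wt P c r i j < 1 := by
  have hc := hc1 i j h
  have : c i j ^ r < 1 := Real.rpow_lt_one (le_of_lt hc.1) hc.2 hr
  calc P i j * c i j ^ r < P i j * 1 := by
        exact mul_lt_mul_of_pos_left this h
    _ ≤ 1 := by rw [mul_one]; exact P_le_one hP0 hProw i j

include hN hPcard in
lemma rho_mem : rho P c r ∈ edgeWts P c r :=
  Set.Nonempty.csSup_mem (edgeWts_nonempty hN hPcard) edgeWts_finite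

include hN hr hPcard hc1 in
lemma rho_pos : 0 < rho P c r := by
  obtain ⟨i, j, hij, hx⟩ := rho_mem hN hPcard
  rw [hx]; exact wt_pos hr hc1 hij

include hN hr hP0 hProw hPcard hc1 in
lemma rho_lt_one : rho P c r < 1 := by
  obtain ⟨i, j, hij, hx⟩ := rho_mem hN hPcard
  rw [hx]; exact wt_lt_one hr hP0 hProw hc1 hij

lemma wt_le_rho {i j : Fin N} (h : 0 < P i j) : wt P c r i j ≤ rho P c r :=
  le_csSup (edgeWts_finite.bddAbove) ⟨i, j, h, rfl⟩

lemma eta_eq_sInf : eta P c r = sInf (edgeWts P c r) := rfl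

include hN hPcard in
lemma eta_mem : eta P c r ∈ edgeWts P c r := by
  rw [eta_eq_sInf]
  exact Set.Nonempty.csInf_mem (edgeWts_nonempty hN hPcard) edgeWts_finite

include hN hr hPcard hc1 in
lemma eta_pos : 0 < eta P c r := by
  obtain ⟨i, j, hij, hx⟩ := eta_mem hN hPcard
  rw [hx]; exact wt_pos hr hc1 hij

include hN hr hP0 hProw hPcard hc1 in
lemma eta_lt_one : eta P c r < 1 := by
  obtain ⟨i, j, hij, hx⟩ := eta_mem hN hPcard
  rw [hx]; exact wt_lt_one hr hP0 hProw hc1 hij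

lemma eta_le_wt {i j : Fin N} (h : 0 < P i j) : eta P c r ≤ wt P c r i j :=
  csInf_le (edgeWts_finite.bddBelow) ⟨i, j, h, rfl⟩

include hN hr hPcard hc1 in
lemma eta_le_rho : eta P c r ≤ rho P c r := by
  obtain ⟨i, j, hij, hx⟩ := eta_mem hN hPcard
  rw [hx]; exact wt_le_rho hij

end
end QAux
namespace QAux
open QM

variable {N : ℕ} {P c : Matrix (Fin N) (Fin N) ℝ} {r : ℝ}

@[simp] lemma gg_nil : gg P c r ([] : List (Fin N)) = 1 := rfl

@[simp] lemma gg_single (a : Fin N) : gg P c r [a] = 1 := rfl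

lemma gg_cons_cons (a b : Fin N) (l : List (Fin N)) :
    gg P c r (a :: b :: l) = wt P c r a b * gg P c r (b :: l) := by
  simp [gg]

lemma adm_nil : Adm P ([] : List (Fin N)) := List.isChain_nil

lemma adm_single (a : Fin N) : Adm P [a] := List.isChain_singleton a

lemma adm_of_prefix {σ ω : List (Fin N)} (h : Adm P σ) (hp : ω <+: σ) : Adm P ω :=
  List.IsChain.prefix h hp

lemma adm_cons_cons {a b : Fin N} {l : List (Fin N)} :
    Adm P (a :: b :: l) ↔ 0 < P a b ∧ Adm P (b :: l) := List.isChain_cons_cons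

section
variable (hr : 0 < r) (hc1 : ∀ i j, 0 < P i j → 0 < c i j ∧ c i j < 1)

include hr hc1 in
lemma gg_pos : ∀ {σ : List (Fin N)}, Adm P σ → 0 < gg P c r σ
  | [], _ => by simp
  | [a], _ => by simp
  | (a :: b :: l), h => by
      rw [gg_cons_cons]
      rcases adm_cons_cons.mp h with ⟨h1, h2⟩
      exact mul_pos (wt_pos hr hc1 h1) (gg_pos h2)

end

lemma gg_concat {l : List (Fin N)} (h : l ≠ []) (a : Fin N) :
    gg P c r (l ++ [a]) = gg P c r l * wt P c r (l.getLast h) a := by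
  induction l with
  | nil => exact absurd rfl h
  | cons x t ih =>
    cases t with
    | nil => simp [gg_cons_cons]
    | cons y t' =>
      have ht : (y :: t') ≠ [] := by simp
      have he : (x :: y :: t') ++ [a] = x :: ((y :: t') ++ [a]) := by simp
      rw [he, List.cons_append, gg_cons_cons, ← List.cons_append, ih ht,
        gg_cons_cons, List.getLast_cons ht]
      ring

lemma adm_concat {l : List (Fin N)} (h : l ≠ []) (a : Fin N) :
    Adm P (l ++ [a]) ↔ Adm P l ∧ 0 < P (l.getLast h) a := by
  unfold Adm List.Chain'
  rw [List.isChain_append]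
  constructor
  · rintro ⟨h1, _, h3⟩
    exact ⟨h1, h3 _ (by simp [List.getLast?_eq_getLast h]) a rfl⟩
  · rintro ⟨h1, h2⟩
    refine ⟨h1, List.isChain_singleton a, ?_⟩
    intro x hx y hy
    rw [List.getLast?_eq_getLast h] at hx
    simp at hx hy
    exact hx ▸ (hy ▸ h2)

end QAux
namespace QAux
open QM

variable {N : ℕ} {P c : Matrix (Fin N) (Fin N) ℝ} {r : ℝ}

section
variable (hN : 2 ≤ N) (hr : 0 < r) (hP0 : ∀ i j, 0 ≤ P i j)
  (hProw : ∀ i, ∑ j, P i j = 1)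
  (hPcard : ∀ i : Fin N, 2 ≤ {j : Fin N | 0 < P i j}.ncard)
  (hc1 : ∀ i j, 0 < P i j → 0 < c i j ∧ c i j < 1)

set_option linter.unusedSectionVars false

include hN hr hP0 hProw hPcard hc1 in
/-- key sandwich: for admissible `σ` and `1 ≤ k`,
`η^(|σ|-k) * gg(take k σ) ≤ gg σ ≤ ρ^(|σ|-k) * gg(take k σ)`. -/
lemma gg_take_bounds : ∀ (σ : List (Fin N)), Adm P σ → ∀ k : ℕ, 1 ≤ k →
    gg P c r σ ≤ rho P c r ^ (σ.length - k) * gg P c r (σ.take k) ∧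
    eta P c r ^ (σ.length - k) * gg P c r (σ.take k) ≤ gg P c r σ := by
  intro σ
  induction σ using List.reverseRecOn with
  | nil => intro _ k hk; simp
  | append_singleton l a ih =>
    intro hadm k hk
    by_cases hlen : (l ++ [a]).length ≤ k
    · rw [List.take_of_length_le hlen, Nat.sub_eq_zero_of_le hlen]
      simp
    push_neg at hlen
    have hl : l ≠ [] := by
      intro h; subst h; simp at hlen; omega
    rcases (adm_concat hl a).mp hadm with ⟨hadml, hedge⟩
    have hkl : k ≤ l.length := by
      have := hlen; simp at this; omega
    have htake : (l ++ [a]).take k = l.take k := List.take_append_of_le_length hkl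
    obtain ⟨ih1, ih2⟩ := ih hadml k hk
    have hggl : 0 < gg P c r l := gg_pos hr hc1 hadml
    have hggt : 0 < gg P c r (l.take k) :=
      gg_pos hr hc1 (adm_of_prefix hadml (List.take_prefix k l))
    have hconcat := gg_concat hl a (P := P) (c := c) (r := r)
    have hexp : (l ++ [a]).length - k = (l.length - k) + 1 := by
      simp; omega
    constructor
    · rw [htake, hconcat, hexp, pow_succ]
      have h1 : gg P c r l * wt P c r (l.getLast hl) a ≤ gg P c r l * rho P c r :=
        mul_le_mul_of_nonneg_left (wt_le_rho hedge) (le_of_lt hggl)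
      calc gg P c r l * wt P c r (l.getLast hl) a ≤ gg P c r l * rho P c r := h1
        _ ≤ (rho P c r ^ (l.length - k) * gg P c r (l.take k)) * rho P c r := by
            apply mul_le_mul_of_nonneg_right ih1 (le_of_lt (rho_pos hN hr hPcard hc1))
        _ = rho P c r ^ (l.length - k) * rho P c r * gg P c r (l.take k) := by ring
    · rw [htake, hconcat, hexp, pow_succ]
      have h1 : gg P c r l * eta P c r ≤ gg P c r l * wt P c r (l.getLast hl) a :=
        mul_le_mul_of_nonneg_left (eta_le_wt hedge) (le_of_lt hggl)
      calc eta P c r ^ (l.length - k) * eta P c r * gg P c r (l.take k)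
          = (eta P c r ^ (l.length - k) * gg P c r (l.take k)) * eta P c r := by ring
        _ ≤ gg P c r l * eta P c r := by
            apply mul_le_mul_of_nonneg_right ih2 (le_of_lt (eta_pos hN hr hPcard hc1))
        _ ≤ gg P c r l * wt P c r (l.getLast hl) a := h1

include hN hr hP0 hProw hPcard hc1 in
lemma gg_le_rho_pow {σ : List (Fin N)} (hadm : Adm P σ) (hσ : σ ≠ []) :
    gg P c r σ ≤ rho P c r ^ (σ.length - 1) := by
  have := (gg_take_bounds hN hr hP0 hProw hPcard hc1 σ hadm 1 le_rfl).1
  rcases σ with _ | ⟨x, t⟩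
  · exact absurd rfl hσ
  · simpa using this

include hN hr hP0 hProw hPcard hc1 in
lemma eta_pow_le_gg {σ : List (Fin N)} (hadm : Adm P σ) (hσ : σ ≠ []) :
    eta P c r ^ (σ.length - 1) ≤ gg P c r σ := by
  have := (gg_take_bounds hN hr hP0 hProw hPcard hc1 σ hadm 1 le_rfl).2
  rcases σ with _ | ⟨x, t⟩
  · exact absurd rfl hσ
  · simpa using this

include hN hr hP0 hProw hPcard hc1 in
/-- prefix bound: if `ω <+: σ`, `ω ≠ []`, then `gg σ ≤ ρ^(|σ|-|ω|) gg ω`. -/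
lemma gg_prefix_le {σ ω : List (Fin N)} (hadm : Adm P σ) (hp : ω <+: σ) (hω : ω ≠ []) :
    gg P c r σ ≤ rho P c r ^ (σ.length - ω.length) * gg P c r ω := by
  have h1 : ω = σ.take ω.length := List.prefix_iff_eq_take.mp hp
  have hk : 1 ≤ ω.length := List.length_pos_iff.mpr hω
  have := (gg_take_bounds hN hr hP0 hProw hPcard hc1 σ hadm ω.length hk).1
  rwa [← h1] at this

include hN hr hP0 hProw hPcard hc1 in
lemma gg_prefix_ge {σ ω : List (Fin N)} (hadm : Adm P σ) (hp : ω <+: σ) (hω : ω ≠ []) :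
    eta P c r ^ (σ.length - ω.length) * gg P c r ω ≤ gg P c r σ := by
  have h1 : ω = σ.take ω.length := List.prefix_iff_eq_take.mp hp
  have hk : 1 ≤ ω.length := List.length_pos_iff.mpr hω
  have := (gg_take_bounds hN hr hP0 hProw hPcard hc1 σ hadm ω.length hk).2
  rwa [← h1] at this

include hN hr hP0 hProw hPcard hc1 in
/-- gg is antitone along prefixes -/
lemma gg_prefix_mono {σ ω : List (Fin N)} (hadm : Adm P σ) (hp : ω <+: σ) (hω : ω ≠ []) :
    gg P c r σ ≤ gg P c r ω := by
  have h := gg_prefix_le hN hr hP0 hProw hPcard hc1 hadm hp hω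
  have hρ1 : rho P c r ^ (σ.length - ω.length) ≤ 1 :=
    pow_le_one₀ (le_of_lt (rho_pos hN hr hPcard hc1))
      (le_of_lt (rho_lt_one hN hr hP0 hProw hPcard hc1))
  have hggω : 0 < gg P c r ω := gg_pos hr hc1 (adm_of_prefix hadm hp)
  nlinarith

end
end QAux
namespace QAux
open QM

variable {N : ℕ} {P c : Matrix (Fin N) (Fin N) ℝ} {r : ℝ}

lemma wprod_nil (M : Matrix (Fin N) (Fin N) ℝ) : wprod M ([] : List (Fin N)) = 1 := rfl
lemma wprod_single (M : Matrix (Fin N) (Fin N) ℝ) (a : Fin N) : wprod M [a] = 1 := rfl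
lemma wprod_cons_cons (M : Matrix (Fin N) (Fin N) ℝ) (a b : Fin N) (l : List (Fin N)) :
    wprod M (a :: b :: l) = M a b * wprod M (b :: l) := by simp [wprod]

section
variable (hN : 2 ≤ N) (hr : 0 < r) (hP0 : ∀ i j, 0 ≤ P i j)
  (hProw : ∀ i, ∑ j, P i j = 1)
  (hPcard : ∀ i : Fin N, 2 ≤ {j : Fin N | 0 < P i j}.ncard)
  (hc1 : ∀ i j, 0 < P i j → 0 < c i j ∧ c i j < 1)

set_option linter.unusedSectionVars false

include hc1 in
lemma wprod_eq_gg : ∀ {σ : List (Fin N)}, Adm P σ →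
    0 ≤ wprod c σ ∧ wprod P σ * wprod c σ ^ r = gg P c r σ
  | [], _ => by simp [wprod_nil, Real.one_rpow]
  | [a], _ => by simp [wprod_single, Real.one_rpow]
  | (a :: b :: l), h => by
      rcases adm_cons_cons.mp h with ⟨h1, h2⟩
      obtain ⟨ih0, ih1⟩ := wprod_eq_gg h2
      have hc : 0 < c a b := (hc1 a b h1).1
      rw [wprod_cons_cons, wprod_cons_cons, gg_cons_cons]
      constructor
      · exact mul_nonneg (le_of_lt hc) ih0
      · rw [Real.mul_rpow (le_of_lt hc) ih0, ← ih1, wt]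
        ring

include hc1 in
lemma mem_Lambda_iff {σ : List (Fin N)} {j : ℕ} :
    σ ∈ Lambda P c r j ↔ σ ≠ [] ∧ Adm P σ ∧
      eta P c r ^ j ≤ gg P c r σ.dropLast ∧ gg P c r σ < eta P c r ^ j := by
  unfold Lambda
  constructor
  · rintro ⟨h1, h2, h3, h4⟩
    have hd := (wprod_eq_gg (r := r) hc1 (adm_of_prefix h2 (List.dropLast_prefix σ))).2
    have hs := (wprod_eq_gg (r := r) hc1 h2).2
    exact ⟨h1, h2, by rwa [hd] at h3, by rwa [hs] at h4⟩
  · rintro ⟨h1, h2, h3, h4⟩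
    have hd := (wprod_eq_gg (r := r) hc1 (adm_of_prefix h2 (List.dropLast_prefix σ))).2
    have hs := (wprod_eq_gg (r := r) hc1 h2).2
    exact ⟨h1, h2, by rwa [hd], by rwa [hs]⟩

include hN hr hP0 hProw hPcard hc1 in
lemma eta_pow_le_one (j : ℕ) : eta P c r ^ j ≤ 1 :=
  pow_le_one₀ (le_of_lt (eta_pos hN hr hPcard hc1))
    (le_of_lt (eta_lt_one hN hr hP0 hProw hPcard hc1))

include hN hr hP0 hProw hPcard hc1 in
/-- Every admissible word whose weight has dropped below `η^j` has a prefix in `Λ_j`. -/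
lemma exists_prefix_mem_Lambda {j : ℕ} : ∀ {σ : List (Fin N)}, Adm P σ →
    gg P c r σ < eta P c r ^ j → ∃ ω, ω <+: σ ∧ ω ∈ Lambda P c r j := by
  intro σ
  induction σ using List.reverseRecOn with
  | nil =>
    intro _ hlt
    exfalso
    have := eta_pow_le_one hN hr hP0 hProw hPcard hc1 (P := P) (c := c) j
    simp at hlt; linarith
  | append_singleton l a ih =>
    intro hadm hlt
    by_cases hge : eta P c r ^ j ≤ gg P c r ((l ++ [a]).dropLast)
    · exact ⟨l ++ [a], List.prefix_refl _,
        (mem_Lambda_iff hc1).mpr ⟨by simp, hadm, hge, hlt⟩⟩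
    · push_neg at hge
      rw [List.dropLast_concat] at hge
      have hadml : Adm P l := adm_of_prefix hadm ⟨[a], rfl⟩
      obtain ⟨ω, hp, hmem⟩ := ih hadml hge
      exact ⟨ω, hp.trans ⟨[a], rfl⟩, hmem⟩

include hPcard in
lemma exists_extension_len {σ : List (Fin N)} (hadm : Adm P σ) (hσ : σ ≠ []) (m : ℕ) :
    ∃ σ', σ <+: σ' ∧ Adm P σ' ∧ σ'.length = σ.length + m := by
  induction m with
  | zero => exact ⟨σ, List.prefix_refl _, hadm, rfl⟩
  | succ n ih =>
    obtain ⟨σ', hp, hadm', hlen⟩ := ih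
    have hσ' : σ' ≠ [] := by
      intro h; rw [h] at hp; rw [List.prefix_nil] at hp; exact hσ hp
    obtain ⟨b, hb⟩ := exists_succ hPcard (σ'.getLast hσ')
    refine ⟨σ' ++ [b], hp.trans ⟨[b], rfl⟩, (adm_concat hσ' b).mpr ⟨hadm', hb⟩, ?_⟩
    simp [hlen]; omega

include hN hr hP0 hProw hPcard hc1 in
lemma exists_extension_gg_lt {σ : List (Fin N)} (hadm : Adm P σ) (hσ : σ ≠ [])
    {ε : ℝ} (hε : 0 < ε) :
    ∃ σ', σ <+: σ' ∧ Adm P σ' ∧ gg P c r σ' < ε := by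
  have hgσ : 0 < gg P c r σ := gg_pos hr hc1 hadm
  obtain ⟨m, hm⟩ := exists_pow_lt_of_lt_one (x := ε / gg P c r σ)
    (div_pos hε hgσ) (rho_lt_one hN hr hP0 hProw hPcard hc1)
  obtain ⟨σ', hp, hadm', hlen⟩ := exists_extension_len hPcard hadm hσ m
  refine ⟨σ', hp, hadm', ?_⟩
  have h1 := gg_prefix_le hN hr hP0 hProw hPcard hc1 hadm' hp hσ
  have h2 : σ'.length - σ.length = m := by omega
  rw [h2] at h1
  have := (lt_div_iff₀ hgσ).mp hm
  calc gg P c r σ' ≤ rho P c r ^ m * gg P c r σ := h1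
    _ < ε := by linarith

include hN hr hP0 hProw hPcard hc1 in
lemma length_le_of_mem_Lambda {K j : ℕ} (hK : rho P c r ^ K < eta P c r)
    {σ : List (Fin N)} (hmem : σ ∈ Lambda P c r j) : σ.length ≤ j * K + 2 := by
  obtain ⟨hne, hadm, hge, hlt⟩ := (mem_Lambda_iff hc1).mp hmem
  by_contra hcon
  push_neg at hcon
  have hlen : j * K + 3 ≤ σ.length := hcon
  have hdne : σ.dropLast ≠ [] := by
    intro h
    have := congrArg List.length h
    simp at this
    omega
  have hdadm : Adm P σ.dropLast := adm_of_prefix hadm (List.dropLast_prefix σ)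
  have h1 : gg P c r σ.dropLast ≤ rho P c r ^ (σ.dropLast.length - 1) :=
    gg_le_rho_pow hN hr hP0 hProw hPcard hc1 hdadm hdne
  have hρpos := rho_pos hN hr hPcard hc1 (P := P) (c := c) (r := r)
  have hρlt1 := rho_lt_one hN hr hP0 hProw hPcard hc1 (P := P) (c := c) (r := r)
  have hηpos := eta_pos hN hr hPcard hc1 (P := P) (c := c) (r := r)
  have hdl : σ.dropLast.length = σ.length - 1 := List.length_dropLast
  have h2 : rho P c r ^ (σ.dropLast.length - 1) ≤ rho P c r ^ (j * K + 1) := by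
    apply pow_le_pow_of_le_one (le_of_lt hρpos) (le_of_lt hρlt1)
    omega
  have h3 : rho P c r ^ (j * K + 1) = rho P c r * (rho P c r ^ K) ^ j := by
    rw [← pow_mul, pow_succ]; ring
  have h4 : (rho P c r ^ K) ^ j ≤ eta P c r ^ j :=
    pow_le_pow_left₀ (pow_nonneg (le_of_lt hρpos) K) (le_of_lt hK) j
  have h5 : rho P c r * (rho P c r ^ K) ^ j < eta P c r ^ j := by
    calc rho P c r * (rho P c r ^ K) ^ j ≤ rho P c r * eta P c r ^ j := by
          apply mul_le_mul_of_nonneg_left h4 (le_of_lt hρpos)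
      _ < 1 * eta P c r ^ j := by
          apply mul_lt_mul_of_pos_right hρlt1 (pow_pos hηpos j)
      _ = eta P c r ^ j := one_mul _
  linarith

include hN hr hP0 hProw hPcard hc1 in
lemma Lambda_finite {K j : ℕ} (hK : rho P c r ^ K < eta P c r) :
    (Lambda P c r j).Finite := by
  apply (List.finite_length_le (Fin N) (j * K + 2)).subset
  intro σ hσ
  exact length_le_of_mem_Lambda hN hr hP0 hProw hPcard hc1 hK hσ

include hN hr hP0 hProw hPcard hc1 in
lemma le_length_of_mem_Lambda {j : ℕ} {σ : List (Fin N)}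
    (hmem : σ ∈ Lambda P c r j) : j + 2 ≤ σ.length := by
  obtain ⟨hne, hadm, hge, hlt⟩ := (mem_Lambda_iff hc1).mp hmem
  have h1 : eta P c r ^ (σ.length - 1) ≤ gg P c r σ :=
    eta_pow_le_gg hN hr hP0 hProw hPcard hc1 hadm hne
  have h2 : eta P c r ^ (σ.length - 1) < eta P c r ^ j := lt_of_le_of_lt h1 hlt
  have hηpos := eta_pos hN hr hPcard hc1 (P := P) (c := c) (r := r)
  have hηlt1 := eta_lt_one hN hr hP0 hProw hPcard hc1 (P := P) (c := c) (r := r)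
  have := (pow_lt_pow_iff_right_of_lt_one₀ hηpos hηlt1).mp h2
  have hσpos : 0 < σ.length := List.length_pos_iff.mpr hne
  omega

end
end QAux
namespace QAux
open QM

variable {N : ℕ} {P c : Matrix (Fin N) (Fin N) ℝ} {r : ℝ}

section
variable (hN : 2 ≤ N) (hr : 0 < r) (hP0 : ∀ i j, 0 ≤ P i j)
  (hProw : ∀ i, ∑ j, P i j = 1)
  (hPcard : ∀ i : Fin N, 2 ≤ {j : Fin N | 0 < P i j}.ncard)
  (hc1 : ∀ i j, 0 < P i j → 0 < c i j ∧ c i j < 1)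

set_option linter.unusedSectionVars false

include hN hr hP0 hProw hPcard hc1 in
/-- Each element of `Λ_{j+1}` has a prefix in `Λ_j`, and the leftover suffix has
length at most `K`. -/
lemma exists_short_prefix {K j : ℕ} (hK : rho P c r ^ K < eta P c r)
    {σ : List (Fin N)} (hmem : σ ∈ Lambda P c r (j + 1)) :
    ∃ ω, ω <+: σ ∧ ω ∈ Lambda P c r j ∧ σ.length - ω.length ≤ K := by
  obtain ⟨hne, hadm, hge, hlt⟩ := (mem_Lambda_iff hc1).mp hmem
  have hηpos := eta_pos hN hr hPcard hc1 (P := P) (c := c) (r := r)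
  have hηlt1 := eta_lt_one hN hr hP0 hProw hPcard hc1 (P := P) (c := c) (r := r)
  have hρpos := rho_pos hN hr hPcard hc1 (P := P) (c := c) (r := r)
  have hρlt1 := rho_lt_one hN hr hP0 hProw hPcard hc1 (P := P) (c := c) (r := r)
  have hlt' : gg P c r σ < eta P c r ^ j := by
    calc gg P c r σ < eta P c r ^ (j+1) := hlt
      _ ≤ eta P c r ^ j := pow_le_pow_of_le_one (le_of_lt hηpos) (le_of_lt hηlt1) (by omega)
  obtain ⟨ω, hp, hω⟩ := exists_prefix_mem_Lambda hN hr hP0 hProw hPcard hc1 hadm hlt'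
  refine ⟨ω, hp, hω, ?_⟩
  obtain ⟨hωne, hωadm, hωge, hωlt⟩ := (mem_Lambda_iff hc1).mp hω
  by_cases heq : ω = σ
  · subst heq; simp
  · -- ω is a proper prefix, hence a prefix of σ.dropLast
    have hlenlt : ω.length < σ.length := by
      rcases List.IsPrefix.length_le hp with h
      rcases lt_or_eq_of_le h with h' | h'
      · exact h'
      · exact absurd (List.IsPrefix.eq_of_length hp h') heq
    have hω1 : 1 ≤ ω.length := List.length_pos_iff.mpr hωne
    have hmin : min ω.length (σ.length - 1) = ω.length := by omega
    have hpd : ω <+: σ.dropLast := by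
      rw [List.prefix_iff_eq_take, List.dropLast_eq_take, List.take_take, hmin]
      exact List.prefix_iff_eq_take.mp hp
    have hdne : σ.dropLast ≠ [] := by
      intro h
      have := congrArg List.length h
      simp [List.length_dropLast] at this
      omega
    have hdadm : Adm P σ.dropLast := adm_of_prefix hadm (List.dropLast_prefix σ)
    have h1 : gg P c r σ.dropLast ≤
        rho P c r ^ (σ.dropLast.length - ω.length) * gg P c r ω :=
      gg_prefix_le hN hr hP0 hProw hPcard hc1 hdadm hpd hωne
    set m := σ.dropLast.length - ω.length with hm
    have h2 : eta P c r ^ (j+1) < rho P c r ^ m * eta P c r ^ j := by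
      calc eta P c r ^ (j+1) ≤ gg P c r σ.dropLast := hge
        _ ≤ rho P c r ^ m * gg P c r ω := h1
        _ < rho P c r ^ m * eta P c r ^ j := by
            apply mul_lt_mul_of_pos_left hωlt (pow_pos hρpos m)
    have h3 : eta P c r < rho P c r ^ m := by
      have hpow : eta P c r ^ (j+1) = eta P c r * eta P c r ^ j := by ring
      rw [hpow] at h2
      have := (mul_lt_mul_iff_left₀ (pow_pos hηpos j)).mp h2
      exact this
    have h4 : rho P c r ^ K < rho P c r ^ m := lt_trans hK h3
    have h5 : m < K := (pow_lt_pow_iff_right_of_lt_one₀ hρpos hρlt1).mp h4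
    have hσd : σ.dropLast.length = σ.length - 1 := List.length_dropLast
    omega

include hN hr hP0 hProw hPcard hc1 in
lemma phi_succ_le {K : ℕ} (hK : rho P c r ^ K < eta P c r) (j : ℕ) :
    phi P c r (j + 1) ≤
      (List.finite_length_le (Fin N) K).toFinset.card * phi P c r j := by
  classical
  have hfin' : (Lambda P c r (j+1)).Finite := Lambda_finite hN hr hP0 hProw hPcard hc1 hK
  have hfin : (Lambda P c r j).Finite := Lambda_finite hN hr hP0 hProw hPcard hc1 hK
  set T := (List.finite_length_le (Fin N) K).toFinset with hT
  have hch : ∀ σ ∈ Lambda P c r (j+1), ∃ ω, ω <+: σ ∧ ω ∈ Lambda P c r j ∧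
      σ.length - ω.length ≤ K := fun σ hσ =>
    exists_short_prefix hN hr hP0 hProw hPcard hc1 hK hσ
  choose! F hF1 hF2 hF3 using hch
  set G : List (Fin N) → List (Fin N) × List (Fin N) :=
    fun σ => (F σ, σ.drop (F σ).length) with hG
  have hmapsto : ∀ σ ∈ Lambda P c r (j+1),
      G σ ∈ (hfin.toFinset ×ˢ T : Finset (List (Fin N) × List (Fin N))) := by
    intro σ hσ
    rw [Finset.mem_product]
    refine ⟨by simpa using hF2 σ hσ, ?_⟩
    rw [hT, Set.Finite.mem_toFinset]
    simp only [hG, Set.mem_setOf_eq, List.length_drop]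
    have := hF3 σ hσ
    omega
  have hinj : ∀ σ ∈ Lambda P c r (j+1), ∀ σ' ∈ Lambda P c r (j+1),
      G σ = G σ' → σ = σ' := by
    intro σ hσ σ' hσ' heq
    have e1 : F σ = F σ' := congrArg Prod.fst heq
    have e2 : σ.drop (F σ).length = σ'.drop (F σ').length := congrArg Prod.snd heq
    have q1 := List.prefix_iff_eq_append.mp (hF1 σ hσ)
    have q2 := List.prefix_iff_eq_append.mp (hF1 σ' hσ')
    calc σ = F σ ++ σ.drop (F σ).length := q1.symm
      _ = F σ' ++ σ'.drop (F σ').length := by rw [e2, e1]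
      _ = σ' := q2
  have := Finset.card_le_card_of_injOn G
    (s := hfin'.toFinset) (t := hfin.toFinset ×ˢ T)
    (by intro σ hσ; exact hmapsto σ (by simpa using hσ))
    (by intro σ hσ σ' hσ' heq
        exact hinj σ (by simpa using hσ) σ' (by simpa using hσ') heq)
  rw [Finset.card_product] at this
  have e1 : phi P c r (j+1) = hfin'.toFinset.card :=
    Set.ncard_eq_toFinset_card _ hfin'
  have e2 : phi P c r j = hfin.toFinset.card :=
    Set.ncard_eq_toFinset_card _ hfin
  rw [e1, e2]
  calc hfin'.toFinset.card ≤ hfin.toFinset.card * T.card := this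
    _ = T.card * hfin.toFinset.card := Nat.mul_comm _ _

end
end QAux
namespace QAux
open QM

variable {N : ℕ} {P c : Matrix (Fin N) (Fin N) ℝ} {r : ℝ}

section
variable (hN : 2 ≤ N) (hr : 0 < r) (hP0 : ∀ i j, 0 ≤ P i j)
  (hProw : ∀ i, ∑ j, P i j = 1)
  (hPcard : ∀ i : Fin N, 2 ≤ {j : Fin N | 0 < P i j}.ncard)
  (hc1 : ∀ i j, 0 < P i j → 0 < c i j ∧ c i j < 1)

set_option linter.unusedSectionVars false

include hN hr hP0 hProw hPcard hc1 in
/-- every short admissible word is the prefix of some element of `Λ_j`. -/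
lemma exists_mem_Lambda_ext (j : ℕ) {σ : List (Fin N)} (hadm : Adm P σ) (hσ : σ ≠ [])
    (hlen : σ.length ≤ j + 2) :
    ∃ ω, ω ∈ Lambda P c r j ∧ σ <+: ω := by
  have hηpos := eta_pos hN hr hPcard hc1 (P := P) (c := c) (r := r)
  obtain ⟨σ', hp, hadm', hlt⟩ := exists_extension_gg_lt hN hr hP0 hProw hPcard hc1
    hadm hσ (pow_pos hηpos j)
  obtain ⟨ω, hpω, hmem⟩ := exists_prefix_mem_Lambda hN hr hP0 hProw hPcard hc1 hadm' hlt
  refine ⟨ω, hmem, ?_⟩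
  rcases List.prefix_or_prefix_of_prefix hp hpω with h | h
  · exact h
  · have h1 : j + 2 ≤ ω.length := le_length_of_mem_Lambda hN hr hP0 hProw hPcard hc1 hmem
    have h2 : ω.length ≤ σ.length := h.length_le
    have h3 := h.eq_of_length_le (by omega)
    rw [h3]

include hN hr hP0 hProw hPcard hc1 in
lemma two_pow_le_phi (j : ℕ) : 2 ^ (j + 1) ≤ phi P c r j := by
  classical
  obtain ⟨K, hK⟩ := exists_pow_lt_of_lt_one
    (eta_pos hN hr hPcard hc1 (P := P) (c := c) (r := r))
    (rho_lt_one hN hr hP0 hProw hPcard hc1 (P := P) (c := c) (r := r))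
  have hfin : (Lambda P c r j).Finite := Lambda_finite hN hr hP0 hProw hPcard hc1 hK
  choose u v hu hv huv using exists_two_succ hPcard
  have hN0 : 0 < N := by omega
  set i0 : Fin N := ⟨0, hN0⟩ with hi0
  set W : (Fin (j+1) → Bool) → ℕ → Fin N := fun f k =>
    Nat.rec i0 (fun m ih => if h : m < j + 1 then
      (if f ⟨m, h⟩ then u ih else v ih) else u ih) k with hW
  have hWsucc : ∀ f k, W f (k+1) = if h : k < j + 1 then
      (if f ⟨k, h⟩ then u (W f k) else v (W f k)) else u (W f k) := fun f k => rfl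
  have hedge : ∀ f k, 0 < P (W f k) (W f (k+1)) := by
    intro f k
    rw [hWsucc]
    by_cases h : k < j + 1
    · rw [dif_pos h]
      by_cases hf : f ⟨k, h⟩
      · rw [if_pos hf]; exact hu _
      · rw [if_neg hf]; exact hv _
    · rw [dif_neg h]; exact hu _
  set word : (Fin (j+1) → Bool) → List (Fin N) := fun f => (List.range (j+2)).map (W f)
    with hword
  have hwlen : ∀ f, (word f).length = j + 2 := by intro f; simp [hword]
  have hwne : ∀ f, word f ≠ [] := by
    intro f h
    have := congrArg List.length h
    rw [hwlen] at this
    simp at this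
  have hwadm : ∀ f, Adm P (word f) := by
    intro f
    rw [hword]
    unfold Adm List.Chain'
    rw [List.isChain_map]
    have : j + 2 = (j + 1) + 1 := rfl
    rw [this, List.isChain_range_succ]
    intro m _
    exact hedge f m
  -- injectivity of `word`
  have hwinj : ∀ f g, word f = word g → f = g := by
    intro f g hfg
    have hptw : ∀ x ∈ List.range (j+2), W f x = W g x := by
      rw [hword] at hfg
      simp only at hfg
      exact fun x hx => List.map_eq_map_iff.mp hfg x hx
    funext m
    have hm1 : (m : ℕ) < j + 1 := m.isLt
    have e1 : W f m = W g m := hptw m (by rw [List.mem_range]; omega)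
    have e2 : W f (m+1) = W g (m+1) := hptw (m+1) (by rw [List.mem_range]; omega)
    rw [hWsucc, hWsucc, dif_pos hm1, dif_pos hm1, ← e1] at e2
    by_cases hf : f ⟨m, hm1⟩ <;> by_cases hg : g ⟨m, hm1⟩
    · simp [hf, hg]
    · simp only [if_pos hf, if_neg hg] at e2
      exact absurd e2 (huv _)
    · simp only [if_neg hf, if_pos hg] at e2
      exact absurd e2.symm (huv _)
    · simp [hf, hg]
  -- map into Λ_j
  have hext : ∀ f, ∃ ω, ω ∈ Lambda P c r j ∧ word f <+: ω := fun f =>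
    exists_mem_Lambda_ext hN hr hP0 hProw hPcard hc1 j (hwadm f) (hwne f) (le_of_eq (hwlen f))
  choose Wd hWd1 hWd2 using hext
  have hinjOn : Set.InjOn Wd Set.univ := by
    intro f _ g _ heq
    apply hwinj
    have q1 : word f = (Wd f).take (word f).length := List.prefix_iff_eq_take.mp (hWd2 f)
    have q2 : word g = (Wd g).take (word g).length := List.prefix_iff_eq_take.mp (hWd2 g)
    rw [q1, q2, hwlen, hwlen, heq]
  have hcard := Set.ncard_le_ncard_of_injOn Wd (fun f _ => hWd1 f) hinjOn hfin
  rw [Set.ncard_univ] at hcard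
  have : Nat.card (Fin (j+1) → Bool) = 2 ^ (j+1) := by
    rw [Nat.card_eq_fintype_card]
    rw [Fintype.card_fun]
    simp
  rw [this] at hcard
  exact hcard

end
end QAux
namespace QAux
open QM MeasureTheory

variable {q : ℕ}

lemma quantErr_set_nonneg (ν : Measure (EuclideanSpace ℝ (Fin q))) (r : ℝ) (n : ℕ) :
    ∀ e ∈ {e : ℝ | ∃ α : Finset (EuclideanSpace ℝ (Fin q)), α.Nonempty ∧ α.card ≤ n ∧
      e = (∫ x, Metric.infDist x (↑α : Set (EuclideanSpace ℝ (Fin q))) ^ r ∂ν) ^ (1 / r)} ,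
      0 ≤ e := by
  rintro e ⟨α, _, _, rfl⟩
  apply Real.rpow_nonneg
  apply integral_nonneg
  intro x
  exact Real.rpow_nonneg Metric.infDist_nonneg r

lemma quantErr_nonneg (ν : Measure (EuclideanSpace ℝ (Fin q))) (r : ℝ) (n : ℕ) :
    0 ≤ quantErr ν r n :=
  Real.sInf_nonneg (quantErr_set_nonneg ν r n)

lemma quantErr_anti (ν : Measure (EuclideanSpace ℝ (Fin q))) (r : ℝ) {m n : ℕ}
    (h1 : 1 ≤ m) (hmn : m ≤ n) : quantErr ν r n ≤ quantErr ν r m := by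
  apply csInf_le_csInf
  · exact ⟨0, fun e he => quantErr_set_nonneg ν r n e he⟩
  · refine ⟨_, ⟨{0}, Finset.singleton_nonempty 0, by simpa using h1, rfl⟩⟩
  · rintro e ⟨α, hne, hcard, rfl⟩
    exact ⟨α, hne, le_trans hcard hmn, rfl⟩

end QAux
namespace QAux
open Filter
open scoped ENNReal

lemma seq_main {e : ℕ → ℝ} (he0 : ∀ n, 0 ≤ e n)
    (hanti : ∀ m n : ℕ, 1 ≤ m → m ≤ n → e n ≤ e m)
    {φ : ℕ → ℕ} (hφ1 : ∀ j, 1 ≤ φ j) (hgrow : ∀ j, j < φ j)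
    {D : ℕ} (hD1 : 1 ≤ D) (hD : ∀ j, φ (j+1) ≤ D * φ j)
    {r s : ℝ} (hr : 0 < r) (hs : 0 < s) :
    (0 < liminf (fun n : ℕ => ENNReal.ofReal ((n:ℝ) ^ (r/s) * e n ^ r)) atTop ↔
      0 < liminf (fun j : ℕ => ENNReal.ofReal ((φ j : ℝ) ^ (r/s) * e (φ j) ^ r)) atTop) ∧
    (limsup (fun n : ℕ => ENNReal.ofReal ((n:ℝ) ^ (r/s) * e n ^ r)) atTop < ⊤ ↔
      limsup (fun j : ℕ => ENNReal.ofReal ((φ j : ℝ) ^ (r/s) * e (φ j) ^ r)) atTop < ⊤) := by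
  set f : ℕ → ℝ≥0∞ := fun n => ENNReal.ofReal ((n:ℝ) ^ (r/s) * e n ^ r) with hf
  have hfφ : (fun j : ℕ => ENNReal.ofReal ((φ j : ℝ) ^ (r/s) * e (φ j) ^ r)) =
      fun j => f (φ j) := rfl
  rw [hfφ]
  have htend : Tendsto φ atTop atTop :=
    tendsto_atTop_mono (fun j => (hgrow j).le) tendsto_id
  have hDposR : (0:ℝ) < (D:ℝ) := by
    have : (1:ℝ) ≤ (D:ℝ) := by exact_mod_cast hD1
    linarith
  have hDrpos : (0:ℝ) < (D:ℝ) ^ (r/s) := Real.rpow_pos_of_pos hDposR _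
  set KD : ℝ≥0∞ := ENNReal.ofReal ((D:ℝ) ^ (r/s)) with hKD
  have hKD0 : KD ≠ 0 := by
    rw [hKD]; simp [ENNReal.ofReal_eq_zero]; linarith
  have hKDtop : KD ≠ ⊤ := ENNReal.ofReal_ne_top
  have hrs : 0 ≤ r / s := le_of_lt (div_pos hr hs)
  -- locating n between consecutive φ's
  have hkey : ∀ J : ℕ, ∀ n, (Finset.range (J+1)).sup φ ≤ n →
      ∃ j, J ≤ j ∧ φ j ≤ n ∧ n < φ (j+1) := by
    intro J n hn
    have hex : ∃ j, n < φ j := ⟨n, hgrow n⟩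
    have hj0spec : n < φ (Nat.find hex) := Nat.find_spec hex
    have hj0J : J + 1 ≤ Nat.find hex := by
      by_contra hcon
      push_neg at hcon
      have h1 : φ (Nat.find hex) ≤ (Finset.range (J+1)).sup φ :=
        Finset.le_sup (Finset.mem_range.mpr (by omega))
      omega
    refine ⟨Nat.find hex - 1, by omega, ?_, ?_⟩
    · have := Nat.find_min hex (m := Nat.find hex - 1) (by omega)
      omega
    · have h2 : Nat.find hex - 1 + 1 = Nat.find hex := by omega
      rw [h2]; exact hj0spec
  -- real comparisons
  have hcast : ∀ j : ℕ, ((φ (j+1) : ℝ)) ≤ (D:ℝ) * (φ j : ℝ) := by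
    intro j; exact_mod_cast hD j
  have hsplit : ∀ j : ℕ, ((D:ℝ) * (φ j : ℝ)) ^ (r/s) =
      (D:ℝ) ^ (r/s) * (φ j : ℝ) ^ (r/s) :=
    fun j => Real.mul_rpow (le_of_lt hDposR) (Nat.cast_nonneg _)
  have hfup : ∀ j n : ℕ, φ j ≤ n → n < φ (j+1) → f n ≤ KD * f (φ j) := by
    intro j n h1 h2
    rw [hf, hKD, ← ENNReal.ofReal_mul (le_of_lt hDrpos)]
    apply ENNReal.ofReal_le_ofReal
    have ha : (n:ℝ) ^ (r/s) ≤ (D:ℝ) ^ (r/s) * (φ j : ℝ) ^ (r/s) := by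
      rw [← hsplit]
      apply Real.rpow_le_rpow (Nat.cast_nonneg _) ?_ hrs
      calc (n:ℝ) ≤ (φ (j+1) : ℝ) := by exact_mod_cast h2.le
        _ ≤ (D:ℝ) * (φ j : ℝ) := hcast j
    have hb : e n ^ r ≤ e (φ j) ^ r :=
      Real.rpow_le_rpow (he0 n) (hanti (φ j) n (hφ1 j) h1) (le_of_lt hr)
    calc (n:ℝ) ^ (r/s) * e n ^ r
        ≤ ((D:ℝ) ^ (r/s) * (φ j : ℝ) ^ (r/s)) * e (φ j) ^ r := by
          apply mul_le_mul ha hb (Real.rpow_nonneg (he0 n) r)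
          positivity
      _ = (D:ℝ) ^ (r/s) * ((φ j : ℝ) ^ (r/s) * e (φ j) ^ r) := by ring
  have hflo : ∀ j n : ℕ, φ j ≤ n → n < φ (j+1) → f (φ (j+1)) ≤ KD * f n := by
    intro j n h1 h2
    rw [hf, hKD, ← ENNReal.ofReal_mul (le_of_lt hDrpos)]
    apply ENNReal.ofReal_le_ofReal
    have hn1 : 1 ≤ n := le_trans (hφ1 j) h1
    have ha : (φ (j+1) : ℝ) ^ (r/s) ≤ (D:ℝ) ^ (r/s) * (n:ℝ) ^ (r/s) := by
      calc (φ (j+1) : ℝ) ^ (r/s) ≤ ((D:ℝ) * (φ j : ℝ)) ^ (r/s) :=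
            Real.rpow_le_rpow (Nat.cast_nonneg _) (hcast j) hrs
        _ = (D:ℝ) ^ (r/s) * (φ j : ℝ) ^ (r/s) := hsplit j
        _ ≤ (D:ℝ) ^ (r/s) * (n:ℝ) ^ (r/s) := by
            apply mul_le_mul_of_nonneg_left ?_ (le_of_lt hDrpos)
            apply Real.rpow_le_rpow (Nat.cast_nonneg _) (by exact_mod_cast h1) hrs
    have hb : e (φ (j+1)) ^ r ≤ e n ^ r :=
      Real.rpow_le_rpow (he0 _) (hanti n (φ (j+1)) hn1 h2.le) (le_of_lt hr)
    calc (φ (j+1) : ℝ) ^ (r/s) * e (φ (j+1)) ^ r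
        ≤ ((D:ℝ) ^ (r/s) * (n:ℝ) ^ (r/s)) * e n ^ r := by
          apply mul_le_mul ha hb (Real.rpow_nonneg (he0 _) r)
          positivity
      _ = (D:ℝ) ^ (r/s) * ((n:ℝ) ^ (r/s) * e n ^ r) := by ring
  constructor
  · constructor
    · -- liminf easy direction
      intro hL
      obtain ⟨b, hb0, hbL⟩ := exists_between hL
      have hev : ∀ᶠ n in atTop, b < f n := eventually_lt_of_lt_liminf hbL
      have hevφ : ∀ᶠ j in atTop, b < f (φ j) := htend.eventually hev
      calc (0:ℝ≥0∞) < b := hb0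
        _ ≤ liminf (fun j => f (φ j)) atTop :=
          le_liminf_of_le (by isBoundedDefault) (hevφ.mono fun j h => h.le)
    · -- liminf hard direction
      intro hL
      obtain ⟨b, hb0, hbL⟩ := exists_between hL
      have hev : ∀ᶠ j in atTop, b < f (φ j) := eventually_lt_of_lt_liminf hbL
      obtain ⟨J, hJ⟩ := eventually_atTop.mp hev
      have hbtop : b ≠ ⊤ := by
        intro h; rw [h] at hbL
        exact absurd hbL (by simp)
      have hevn : ∀ᶠ n in atTop, b / KD ≤ f n := by
        rw [eventually_atTop]
        refine ⟨(Finset.range (J+1)).sup φ, fun n hn => ?_⟩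
        obtain ⟨j, hjJ, hj1, hj2⟩ := hkey J n hn
        have h1 : b < f (φ (j+1)) := hJ (j+1) (by omega)
        have h2 : f (φ (j+1)) ≤ KD * f n := hflo j n hj1 hj2
        have h3 : b ≤ f n * KD := by
          calc b ≤ KD * f n := le_trans h1.le h2
            _ = f n * KD := mul_comm _ _
        exact ENNReal.div_le_of_le_mul h3
      have hpos : 0 < b / KD := ENNReal.div_pos (ne_of_gt hb0) hKDtop
      calc (0:ℝ≥0∞) < b / KD := hpos
        _ ≤ liminf f atTop := le_liminf_of_le (by isBoundedDefault) hevn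
  · constructor
    · -- limsup easy direction
      intro hL
      have hb : limsup f atTop < limsup f atTop + 1 :=
        ENNReal.lt_add_right (ne_of_lt hL) one_ne_zero
      have hev : ∀ᶠ n in atTop, f n < limsup f atTop + 1 := eventually_lt_of_limsup_lt hb
      have hevφ : ∀ᶠ j in atTop, f (φ j) < limsup f atTop + 1 := htend.eventually hev
      calc limsup (fun j => f (φ j)) atTop ≤ limsup f atTop + 1 :=
            limsup_le_of_le (by isBoundedDefault) (hevφ.mono fun j h => h.le)
        _ < ⊤ := ENNReal.add_lt_top.mpr ⟨hL, ENNReal.one_lt_top⟩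
    · -- limsup hard direction
      intro hL
      set L := limsup (fun j => f (φ j)) atTop with hLdef
      have hb : L < L + 1 := ENNReal.lt_add_right (ne_of_lt hL) one_ne_zero
      have hev : ∀ᶠ j in atTop, f (φ j) < L + 1 := eventually_lt_of_limsup_lt hb
      obtain ⟨J, hJ⟩ := eventually_atTop.mp hev
      have hevn : ∀ᶠ n in atTop, f n ≤ KD * (L + 1) := by
        rw [eventually_atTop]
        refine ⟨(Finset.range (J+1)).sup φ, fun n hn => ?_⟩
        obtain ⟨j, hjJ, hj1, hj2⟩ := hkey J n hn
        have h1 : f (φ j) ≤ L + 1 := (hJ j hjJ).le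
        calc f n ≤ KD * f (φ j) := hfup j n hj1 hj2
          _ ≤ KD * (L + 1) := mul_le_mul_right h1 KD
      calc limsup f atTop ≤ KD * (L + 1) :=
            limsup_le_of_le (by isBoundedDefault) hevn
        _ < ⊤ := ENNReal.mul_lt_top (Ne.lt_top hKDtop)
            (ENNReal.add_lt_top.mpr ⟨hL, ENNReal.one_lt_top⟩)
end QAux



open QM in
theorem qcoeff_iff_subsequence
    {q : ℕ}
    {N : ℕ} (hN : 2 ≤ N)
    (P c : Matrix (Fin N) (Fin N) ℝ) (r : ℝ) (hr : 0 < r)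
    (hP0 : ∀ i j, 0 ≤ P i j)
    (hProw : ∀ i, ∑ j, P i j = 1)
    (hPcard : ∀ i : Fin N, 2 ≤ {j : Fin N | 0 < P i j}.ncard)
    (hc1 : ∀ i j, 0 < P i j → 0 < c i j ∧ c i j < 1)
    (hc0 : ∀ i j, P i j = 0 → c i j = 0)
    (J : List (Fin N) → Set (EuclideanSpace ℝ (Fin q)))
    (hJ : ∀ σ : List (Fin N), σ ≠ [] → QM.Adm P σ →
      IsCompact (J σ) ∧ (J σ).Nonempty ∧ J σ = closure (interior (J σ)))
    (hJdiam1 : ∀ i : Fin N, Metric.diam (J [i]) = 1)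
    (hJsub : ∀ (σ : List (Fin N)) (a : Fin N), σ ≠ [] → QM.Adm P (σ ++ [a]) →
      J (σ ++ [a]) ⊆ J σ)
    (hJdisj : ∀ (σ : List (Fin N)) (a b : Fin N), σ ≠ [] → a ≠ b →
      QM.Adm P (σ ++ [a]) → QM.Adm P (σ ++ [b]) →
      Disjoint (interior (J (σ ++ [a]))) (interior (J (σ ++ [b]))))
    (hJdiam : ∀ (σ : List (Fin N)) (a : Fin N) (h : σ ≠ []), QM.Adm P (σ ++ [a]) →
      Metric.diam (J (σ ++ [a])) = c (σ.getLast h) a * Metric.diam (J σ))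
    (hsep : ∃ t : ℝ, 0 < t ∧ t < 1 ∧ ∀ (σ : List (Fin N)) (a b : Fin N), σ ≠ [] → a ≠ b →
      QM.Adm P (σ ++ [a]) → QM.Adm P (σ ++ [b]) →
      ∀ x ∈ J (σ ++ [a]), ∀ y ∈ J (σ ++ [b]),
        t * max (Metric.diam (J (σ ++ [a]))) (Metric.diam (J (σ ++ [b]))) ≤ dist x y)
    (χ : Fin N → ℝ) (hχpos : ∀ i, 0 < χ i) (hχsum : ∑ i, χ i = 1)
    (μ : Measure (EuclideanSpace ℝ (Fin q))) (hprob : IsProbabilityMeasure μ)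
    (hμE : μ (⋂ k : ℕ, ⋃ (σ : List (Fin N)) (_ : σ.length = k + 1 ∧ QM.Adm P σ), J σ) = 1)
    (hμJ : ∀ (σ : List (Fin N)) (h : σ ≠ []), QM.Adm P σ →
      μ (J σ) = ENNReal.ofReal (χ (σ.head h) * QM.wprod P σ))
    :
    ∀ s : ℝ, 0 < s →
      ((0 < QM.lowerQCoeff μ r s ↔
        0 < Filter.liminf (fun j : ℕ =>
          ENNReal.ofReal ((QM.phi P c r j : ℝ) ^ (r / s) *
            QM.quantErr μ r (QM.phi P c r j) ^ r)) Filter.atTop) ∧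
      (QM.upperQCoeff μ r s < ⊤ ↔
        Filter.limsup (fun j : ℕ =>
          ENNReal.ofReal ((QM.phi P c r j : ℝ) ^ (r / s) *
            QM.quantErr μ r (QM.phi P c r j) ^ r)) Filter.atTop < ⊤)) := by
  intro s hs
  classical
  obtain ⟨K, hK⟩ := exists_pow_lt_of_lt_one
    (QAux.eta_pos hN hr hPcard hc1 (P := P) (c := c) (r := r))
    (QAux.rho_lt_one hN hr hP0 hProw hPcard hc1 (P := P) (c := c) (r := r))
  have hφ1 : ∀ j, 1 ≤ QM.phi P c r j := by
    intro j
    have h1 := QAux.two_pow_le_phi hN hr hP0 hProw hPcard hc1 (r := r) j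
    have h2 : 1 ≤ 2 ^ (j+1) := Nat.one_le_two_pow
    omega
  have hgrow : ∀ j, j < QM.phi P c r j := by
    intro j
    have h1 := QAux.two_pow_le_phi hN hr hP0 hProw hPcard hc1 (r := r) j
    have h2 : j < 2 ^ j := Nat.lt_two_pow_self
    have h3 : 2 ^ j ≤ 2 ^ (j+1) := Nat.pow_le_pow_right (by omega) (by omega)
    omega
  have hD1 : 1 ≤ (List.finite_length_le (Fin N) K).toFinset.card := by
    apply Finset.card_pos.mpr
    exact ⟨[], by simp⟩
  have hD : ∀ j, QM.phi P c r (j+1) ≤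
      (List.finite_length_le (Fin N) K).toFinset.card * QM.phi P c r j :=
    fun j => QAux.phi_succ_le hN hr hP0 hProw hPcard hc1 hK j
  have h := QAux.seq_main (e := QM.quantErr μ r) (φ := QM.phi P c r)
    (fun n => QAux.quantErr_nonneg μ r n)
    (fun m n h1 h2 => QAux.quantErr_anti μ r h1 h2)
    hφ1 hgrow hD1 hD hr hs
  exact h
end

section
/- Let p̄ = max{p_{ij} : p_{ij} > 0}, c̄ = max{c_{ij} : p_{ij} > 0}, and N_1 = min{h ∈ ℕ : (p̄ c̄^r)^h < η}. Then for every j ≥ 1 one has φ_{j,r} ≤ φ_{j+1,r} ≤ N^{N_1} φ_{j,r}. -/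
open Filter MeasureTheory
open scoped ENNReal

namespace QMProof
open QM List

variable {N : ℕ} {P c : Matrix (Fin N) (Fin N) ℝ} {r : ℝ}

/-- total weight of a word -/
noncomputable def Wt (P c : Matrix (Fin N) (Fin N) ℝ) (r : ℝ) (σ : List (Fin N)) : ℝ :=
  wprod P σ * wprod c σ ^ r

lemma wprod_nil (M : Matrix (Fin N) (Fin N) ℝ) : wprod M ([] : List (Fin N)) = 1 := by
  simp [wprod]

lemma wprod_singleton (M : Matrix (Fin N) (Fin N) ℝ) (a : Fin N) : wprod M [a] = 1 := by
  simp [wprod]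

lemma wprod_cons₂ (M : Matrix (Fin N) (Fin N) ℝ) (a b : Fin N) (l : List (Fin N)) :
    wprod M (a :: b :: l) = M a b * wprod M (b :: l) := by
  simp [wprod]

lemma wprod_pos (M : Matrix (Fin N) (Fin N) ℝ) (hM : ∀ i j, 0 < P i j → 0 < M i j) :
    ∀ σ : List (Fin N), Adm P σ → 0 < wprod M σ
  | [], _ => by simp [wprod]
  | [a], _ => by simp [wprod]
  | a :: b :: l, h => by
      rw [wprod_cons₂]
      have h' := List.isChain_cons_cons.mp h
      exact mul_pos (hM _ _ h'.1) (wprod_pos M hM (b :: l) h'.2)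

lemma wprod_snoc (M : Matrix (Fin N) (Fin N) ℝ) :
    ∀ (σ : List (Fin N)) (hσ : σ ≠ []) (a : Fin N),
      wprod M (σ ++ [a]) = wprod M σ * M (σ.getLast hσ) a
  | [], h, _ => absurd rfl h
  | [x], _, a => by simp [wprod]
  | x :: y :: l, _, a => by
      have h1 : wprod M ((x :: y :: l) ++ [a]) = M x y * wprod M ((y :: l) ++ [a]) :=
        wprod_cons₂ M x y (l ++ [a])
      rw [h1, wprod_snoc M (y :: l) (List.cons_ne_nil _ _) a, wprod_cons₂]
      rw [List.getLast_cons (List.cons_ne_nil _ _)]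
      ring

lemma adm_snoc (σ : List (Fin N)) (hσ : σ ≠ []) (a : Fin N) :
    Adm P (σ ++ [a]) ↔ Adm P σ ∧ 0 < P (σ.getLast hσ) a := by
  simp only [Adm, List.Chain', List.isChain_append]
  simp [List.getLast?_eq_getLast_of_ne_nil hσ, Adm, List.Chain']

end QMProof

open QMProof QM List in
open QM in
theorem phi_growth
    {N : ℕ} (hN : 2 ≤ N)
    (P c : Matrix (Fin N) (Fin N) ℝ) (r : ℝ) (hr : 0 < r)
    (hP0 : ∀ i j, 0 ≤ P i j)
    (hProw : ∀ i, ∑ j, P i j = 1)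
    (hPcard : ∀ i : Fin N, 2 ≤ {j : Fin N | 0 < P i j}.ncard)
    (hc1 : ∀ i j, 0 < P i j → 0 < c i j ∧ c i j < 1)
    (hc0 : ∀ i j, P i j = 0 → c i j = 0)
    (pbar cbar : ℝ)
    (hpbar : IsGreatest {x : ℝ | ∃ i j, 0 < P i j ∧ x = P i j} pbar)
    (hcbar : IsGreatest {x : ℝ | ∃ i j, 0 < P i j ∧ x = c i j} cbar)
    (N₁ : ℕ)
    (hN₁ : IsLeast {h : ℕ | (pbar * cbar ^ r) ^ h < QM.eta P c r} N₁)
    :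
    ∀ j : ℕ, 1 ≤ j →
      QM.phi P c r j ≤ QM.phi P c r (j + 1) ∧
      QM.phi P c r (j + 1) ≤ N ^ N₁ * QM.phi P c r j := by
  classical
  have hetadef : QM.eta P c r
      = sInf {x : ℝ | ∃ i j, 0 < P i j ∧ x = P i j * c i j ^ r} := rfl
  set η := QM.eta P c r with hηdef
  set b := pbar * cbar ^ r with hbdef
  have hNpos : 0 < N := by omega
  have hedge : ∀ i : Fin N, ∃ j, 0 < P i j := by
    intro i
    by_contra h
    push_neg at h
    have he : {j : Fin N | 0 < P i j} = ∅ :=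
      Set.eq_empty_iff_forall_notMem.mpr fun j hj => absurd hj (not_lt.mpr (h j))
    have h2 := hPcard i
    rw [he, Set.ncard_empty] at h2
    omega
  have hSfin : {x : ℝ | ∃ i j, 0 < P i j ∧ x = P i j * c i j ^ r}.Finite := by
    apply Set.Finite.subset
      (Set.finite_range fun p : Fin N × Fin N => P p.1 p.2 * c p.1 p.2 ^ r)
    rintro x ⟨i, j, -, rfl⟩
    exact ⟨(i, j), rfl⟩
  have hSne : {x : ℝ | ∃ i j, 0 < P i j ∧ x = P i j * c i j ^ r}.Nonempty := by
    obtain ⟨j0, hj0⟩ := hedge ⟨0, hNpos⟩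
    exact ⟨_, ⟨_, j0, hj0, rfl⟩⟩
  have hη_le : ∀ i j, 0 < P i j → η ≤ P i j * c i j ^ r := fun i j hij =>
    csInf_le hSfin.bddBelow ⟨i, j, hij, rfl⟩
  have hη_mem : ∃ i j, 0 < P i j ∧ η = P i j * c i j ^ r :=
    Set.Nonempty.csInf_mem hSne hSfin
  have hwpos : ∀ i j, 0 < P i j → 0 < P i j * c i j ^ r := fun i j hij =>
    mul_pos hij (Real.rpow_pos_of_pos (hc1 i j hij).1 r)
  have hηpos : 0 < η := by
    obtain ⟨i, j, hij, hx⟩ := hη_mem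
    rw [hx]; exact hwpos i j hij
  have hP_le_one : ∀ i j, P i j ≤ 1 := by
    intro i j
    calc P i j ≤ ∑ k, P i k :=
          Finset.single_le_sum (fun k _ => hP0 i k) (Finset.mem_univ j)
      _ = 1 := hProw i
  have hwlt1 : ∀ i j, 0 < P i j → P i j * c i j ^ r < 1 := by
    intro i j hij
    have hc := hc1 i j hij
    have h1 : c i j ^ r < 1 := Real.rpow_lt_one hc.1.le hc.2 hr
    calc P i j * c i j ^ r ≤ 1 * (c i j ^ r) :=
          mul_le_mul_of_nonneg_right (hP_le_one i j) (Real.rpow_nonneg hc.1.le r)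
      _ = c i j ^ r := one_mul _
      _ < 1 := h1
  have hηlt1 : η < 1 := by
    obtain ⟨i, j, hij, hx⟩ := hη_mem
    rw [hx]; exact hwlt1 i j hij
  have hpbar_pos : 0 < pbar := by
    obtain ⟨i, j, hij, hx⟩ := hpbar.1; rw [hx]; exact hij
  have hpbar_le1 : pbar ≤ 1 := by
    obtain ⟨i, j, hij, hx⟩ := hpbar.1; rw [hx]; exact hP_le_one i j
  have hcbar_pos : 0 < cbar := by
    obtain ⟨i, j, hij, hx⟩ := hcbar.1; rw [hx]; exact (hc1 i j hij).1
  have hcbar_lt1 : cbar < 1 := by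
    obtain ⟨i, j, hij, hx⟩ := hcbar.1; rw [hx]; exact (hc1 i j hij).2
  have hbpos : 0 < b := mul_pos hpbar_pos (Real.rpow_pos_of_pos hcbar_pos r)
  have hblt1 : b < 1 := by
    have h1 : cbar ^ r < 1 := Real.rpow_lt_one hcbar_pos.le hcbar_lt1 hr
    calc b ≤ 1 * cbar ^ r :=
          mul_le_mul_of_nonneg_right hpbar_le1 (Real.rpow_nonneg hcbar_pos.le r)
      _ = cbar ^ r := one_mul _
      _ < 1 := h1
  have hwle_b : ∀ i j, 0 < P i j → P i j * c i j ^ r ≤ b := by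
    intro i j hij
    have hc := hc1 i j hij
    exact mul_le_mul (hpbar.2 ⟨i, j, hij, rfl⟩)
      (Real.rpow_le_rpow hc.1.le (hcbar.2 ⟨i, j, hij, rfl⟩) hr.le)
      (Real.rpow_nonneg hc.1.le r) hpbar_pos.le
  have hbN₁ : b ^ N₁ < η := hN₁.1
  have hN₁lem : ∀ m : ℕ, η ≤ b ^ m → m < N₁ := by
    intro m hm
    by_contra h
    push_neg at h
    have h2 : b ^ m ≤ b ^ N₁ := pow_le_pow_of_le_one hbpos.le hblt1.le h
    exact absurd (hm.trans_lt (h2.trans_lt hbN₁)) (lt_irrefl η)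
  have hN₁pos : 0 < N₁ := by
    rcases Nat.eq_zero_or_pos N₁ with h0 | h0
    · rw [h0] at hbN₁
      simp only [pow_zero] at hbN₁
      exact absurd (hbN₁.trans hηlt1) (lt_irrefl 1)
    · exact h0
  -- weight basics
  have hWpos : ∀ σ, Adm P σ → 0 < Wt P c r σ := fun σ hσ =>
    mul_pos (wprod_pos P (fun _ _ h => h) σ hσ)
      (Real.rpow_pos_of_pos (wprod_pos c (fun i j h => (hc1 i j h).1) σ hσ) r)
  have hW1 : ∀ σ : List (Fin N), σ.length ≤ 1 → Wt P c r σ = 1 := by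
    intro σ hσ
    match σ, hσ with
    | [], _ => simp [Wt, wprod]
    | [a], _ => simp [Wt, wprod]
  have hWsnoc : ∀ (σ : List (Fin N)) (hσ : σ ≠ []) (a : Fin N), Adm P (σ ++ [a]) →
      Wt P c r (σ ++ [a])
        = Wt P c r σ * (P (σ.getLast hσ) a * c (σ.getLast hσ) a ^ r) := by
    intro σ hσ a hadm
    have hedge' : 0 < P (σ.getLast hσ) a := ((adm_snoc σ hσ a).mp hadm).2
    have hadmσ : Adm P σ := ((adm_snoc σ hσ a).mp hadm).1
    have hcnn : 0 ≤ c (σ.getLast hσ) a := (hc1 _ _ hedge').1.le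
    have hwc : 0 ≤ wprod c σ :=
      (wprod_pos c (fun i j h => (hc1 i j h).1) σ hadmσ).le
    rw [Wt, Wt, wprod_snoc P σ hσ a, wprod_snoc c σ hσ a, Real.mul_rpow hwc hcnn]
    ring
  -- prefix monotonicity
  have hpre : ∀ (δ σ : List (Fin N)), σ ≠ [] → Adm P (σ ++ δ) →
      Wt P c r (σ ++ δ) ≤ Wt P c r σ ∧
        Wt P c r (σ ++ δ) ≤ Wt P c r σ * b ^ δ.length := by
    intro δ
    induction δ using List.reverseRecOn with
    | nil => intro σ hσ hadm; simp
    | append_singleton δ' a ih =>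
        intro σ hσ hadm
        have hassoc : σ ++ (δ' ++ [a]) = (σ ++ δ') ++ [a] := (List.append_assoc _ _ _).symm
        rw [hassoc] at hadm ⊢
        have hne : σ ++ δ' ≠ [] := fun h => hσ (List.append_eq_nil_iff.mp h).1
        have hadm' : Adm P (σ ++ δ') := hadm.prefix (List.prefix_append _ _)
        have hedge' : 0 < P ((σ ++ δ').getLast hne) a := ((adm_snoc _ hne a).mp hadm).2
        have hsn := hWsnoc (σ ++ δ') hne a hadm
        have ihs := ih σ hσ hadm'
        have hwb := hwle_b _ _ hedge'
        have hw1 := hwlt1 _ _ hedge'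
        have hWp := hWpos _ hadm'
        constructor
        · calc Wt P c r ((σ ++ δ') ++ [a]) = Wt P c r (σ ++ δ') * _ := hsn
            _ ≤ Wt P c r (σ ++ δ') * 1 := mul_le_mul_of_nonneg_left hw1.le hWp.le
            _ = Wt P c r (σ ++ δ') := mul_one _
            _ ≤ Wt P c r σ := ihs.1
        · calc Wt P c r ((σ ++ δ') ++ [a]) = Wt P c r (σ ++ δ') * _ := hsn
            _ ≤ Wt P c r (σ ++ δ') * b := mul_le_mul_of_nonneg_left hwb hWp.le
            _ ≤ (Wt P c r σ * b ^ δ'.length) * b :=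
                mul_le_mul_of_nonneg_right ihs.2 hbpos.le
            _ = Wt P c r σ * b ^ (δ'.length + 1) := by rw [pow_succ]; ring
            _ = Wt P c r σ * b ^ (δ' ++ [a]).length := by simp
  -- antichain property
  have hanti : ∀ (k : ℕ) (σ ω : List (Fin N)), σ ∈ Lambda P c r k →
      ω ∈ Lambda P c r k → σ <+: ω → σ = ω := by
    intro k σ ω hσ hω hpfx
    by_contra hne
    obtain ⟨t, rfl⟩ := hpfx
    have ht : t ≠ [] := by rintro rfl; exact hne (by simp)
    have hd : (σ ++ t).dropLast = σ ++ t.dropLast := List.dropLast_append_of_ne_nil ht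
    obtain ⟨hσne, hσadm, hσlow, hσup⟩ := hσ
    obtain ⟨hωne, hωadm, hωlow, hωup⟩ := hω
    have hadm' : Adm P (σ ++ t.dropLast) :=
      hωadm.prefix (hd ▸ List.dropLast_prefix (σ ++ t))
    have h1 : Wt P c r (σ ++ t.dropLast) ≤ Wt P c r σ := (hpre t.dropLast σ hσne hadm').1
    have h2 : η ^ k ≤ Wt P c r (σ ++ t.dropLast) := by
      rw [← hd]; exact hωlow
    have h3 : Wt P c r σ < η ^ k := hσup
    exact absurd ((h2.trans h1).trans_lt h3) (lt_irrefl _)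
  -- upper bound on weights
  have hWub : ∀ ρ : List (Fin N), ρ ≠ [] → Adm P ρ → Wt P c r ρ ≤ b ^ (ρ.length - 1) := by
    intro ρ hρ hadm
    obtain ⟨x, l, rfl⟩ := List.exists_cons_of_ne_nil hρ
    have h2 : Wt P c r ([x] ++ l) ≤ Wt P c r [x] * b ^ l.length :=
      (hpre l [x] (by simp) (by simpa using hadm)).2
    rw [hW1 [x] (by simp), one_mul] at h2
    simpa using h2
  -- finiteness
  have hfin : ∀ k : ℕ, 1 ≤ k → (Lambda P c r k).Finite := by
    intro k hk
    apply Set.Finite.subset (List.finite_length_le (Fin N) (N₁ * k + 1))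
    rintro σ ⟨hne, hadm, hlow, hup⟩
    simp only [Set.mem_setOf_eq]
    have hσlen : 1 ≤ σ.length := List.length_pos_iff.mpr hne
    by_cases hd : σ.dropLast = []
    · have h1 : σ.dropLast.length = 0 := by rw [hd]; rfl
      rw [List.length_dropLast] at h1
      omega
    · have hadmρ : Adm P σ.dropLast := hadm.prefix (List.dropLast_prefix σ)
      have h1 : η ^ k ≤ b ^ (σ.dropLast.length - 1) :=
        le_trans hlow (hWub _ hd hadmρ)
      have h2 : b ^ (N₁ * k) < η ^ k := by
        have h3 := pow_lt_pow_left₀ hbN₁ (pow_nonneg hbpos.le N₁)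
          (Nat.one_le_iff_ne_zero.mp hk)
        rwa [← pow_mul] at h3
      have h4 : σ.dropLast.length - 1 < N₁ * k :=
        (pow_lt_pow_iff_right_of_lt_one₀ hbpos hblt1).mp (h2.trans_le h1)
      have h5 : σ.dropLast.length = σ.length - 1 := List.length_dropLast
      have h6 : 1 ≤ σ.dropLast.length := List.length_pos_iff.mpr hd
      omega
  intro j hj
  have hη_le_η : η ^ (j + 1) ≤ η ^ j :=
    pow_le_pow_of_le_one hηpos.le hηlt1.le (Nat.le_succ j)
  have hηj1pos : 0 < η ^ (j + 1) := pow_pos hηpos _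
  have hη1le : ∀ m : ℕ, η ^ m ≤ 1 := fun m => pow_le_one₀ hηpos.le hηlt1.le
  -- extension lemma
  have hEXT : ∀ (k : ℕ) (σ : List (Fin N)), σ ≠ [] → Adm P σ →
      η ^ (j + 1) ≤ Wt P c r σ.dropLast → Wt P c r σ * b ^ k < η ^ (j + 1) →
      ∃ τ ∈ Lambda P c r (j + 1), σ <+: τ := by
    intro k
    induction k with
    | zero =>
        intro σ hne hadm hdl hup
        rw [pow_zero, mul_one] at hup
        exact ⟨σ, ⟨hne, hadm, hdl, hup⟩, List.prefix_refl σ⟩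
    | succ k ih =>
        intro σ hne hadm hdl hup
        by_cases hc' : Wt P c r σ < η ^ (j + 1)
        · exact ⟨σ, ⟨hne, hadm, hdl, hc'⟩, List.prefix_refl σ⟩
        · push_neg at hc'
          obtain ⟨a, ha⟩ := hedge (σ.getLast hne)
          have hadm' : Adm P (σ ++ [a]) := (adm_snoc σ hne a).mpr ⟨hadm, ha⟩
          have hdl' : η ^ (j + 1) ≤ Wt P c r ((σ ++ [a]).dropLast) := by
            rw [List.dropLast_concat]; exact hc'
          have hup' : Wt P c r (σ ++ [a]) * b ^ k < η ^ (j + 1) := by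
            have hsn := hWsnoc σ hne a hadm'
            have hwb := hwle_b _ _ ha
            have hWp := (hWpos σ hadm).le
            calc Wt P c r (σ ++ [a]) * b ^ k ≤ (Wt P c r σ * b) * b ^ k := by
                  rw [hsn]
                  exact mul_le_mul_of_nonneg_right
                    (mul_le_mul_of_nonneg_left hwb hWp) (pow_nonneg hbpos.le k)
              _ = Wt P c r σ * b ^ (k + 1) := by rw [pow_succ]; ring
              _ < η ^ (j + 1) := hup
          obtain ⟨τ, hτ, hp⟩ := ih (σ ++ [a]) (by simp) hadm' hdl' hup'
          exact ⟨τ, hτ, (List.prefix_append σ [a]).trans hp⟩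
  -- canonical prefix in Λ_j of an element of Λ_{j+1}
  have hcanon : ∀ ω : List (Fin N), ∃ σ : List (Fin N),
      ω ∈ Lambda P c r (j + 1) →
      σ ∈ Lambda P c r j ∧ σ <+: ω ∧ ω.length ≤ σ.length + N₁ := by
    intro ω
    by_cases hω : ω ∈ Lambda P c r (j + 1)
    case neg => exact ⟨[], fun h => absurd h hω⟩
    obtain ⟨hne, hadm, hlow, hup⟩ := hω
    have hup' : Wt P c r ω < η ^ (j + 1) := hup
    have hlow' : η ^ (j + 1) ≤ Wt P c r ω.dropLast := hlow
    have hlen2 : 2 ≤ ω.length := by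
      by_contra h
      push_neg at h
      have h1 : ω.length ≤ 1 := by omega
      rw [hW1 ω h1] at hup'
      exact absurd (hup'.trans_le (hη1le (j + 1))) (lt_irrefl 1)
    have hQn : Wt P c r (ω.take (ω.length - 2 + 2)) < η ^ j := by
      rw [show ω.length - 2 + 2 = ω.length by omega, List.take_length]
      exact hup'.trans_le hη_le_η
    have hQ : ∃ n, Wt P c r (ω.take (n + 2)) < η ^ j := ⟨ω.length - 2, hQn⟩
    set m := Nat.find hQ with hm
    have hspec : Wt P c r (ω.take (m + 2)) < η ^ j := Nat.find_spec hQ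
    have hmle : m ≤ ω.length - 2 := Nat.find_le hQn
    have hm2 : m + 2 ≤ ω.length := by omega
    refine ⟨ω.take (m + 2), fun _ => ?_⟩
    have hlenσ : (ω.take (m + 2)).length = m + 2 := by rw [List.length_take]; omega
    have hσne : ω.take (m + 2) ≠ [] := by
      intro h; rw [h] at hlenσ; simp at hlenσ
    have hσadm : Adm P (ω.take (m + 2)) := hadm.prefix (List.take_prefix _ _)
    have hdl : (ω.take (m + 2)).dropLast = ω.take (m + 1) := by
      rw [List.dropLast_eq_take, hlenσ, List.take_take]
      congr 1
      omega
    have hdlge : η ^ j ≤ Wt P c r (ω.take (m + 1)) := by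
      rcases Nat.eq_zero_or_pos m with h0 | h0
      · rw [h0, hW1 (ω.take (0 + 1)) (by rw [List.length_take]; omega)]
        exact hη1le j
      · have h1 : m - 1 < Nat.find hQ := by omega
        have h2 := not_lt.mp (Nat.find_min hQ h1)
        have h3 : m - 1 + 2 = m + 1 := by omega
        rwa [h3] at h2
    have hmemσ : ω.take (m + 2) ∈ Lambda P c r j :=
      ⟨hσne, hσadm, by rw [hdl]; exact hdlge, hspec⟩
    refine ⟨hmemσ, List.take_prefix _ _, ?_⟩
    rw [hlenσ]
    -- length bound
    set δ := ω.drop (m + 2) with hδdef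
    have hωeq : ω.take (m + 2) ++ δ = ω := List.take_append_drop _ _
    by_cases hδnil : δ = []
    · have h1 : ω.length = m + 2 := by
        rw [← hωeq, hδnil, List.append_nil, hlenσ]
      omega
    · have hd2 : ω.dropLast = ω.take (m + 2) ++ δ.dropLast := by
        conv_lhs => rw [← hωeq, List.dropLast_append_of_ne_nil hδnil]
      have hadm2 : Adm P (ω.take (m + 2) ++ δ.dropLast) := by
        rw [← hd2]; exact hadm.prefix (List.dropLast_prefix ω)
      have h5 : Wt P c r (ω.take (m + 2) ++ δ.dropLast)
          ≤ Wt P c r (ω.take (m + 2)) * b ^ δ.dropLast.length :=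
        (hpre _ _ hσne hadm2).2
      have h6 : η ^ (j + 1) ≤ Wt P c r (ω.take (m + 2) ++ δ.dropLast) := by
        rw [← hd2]; exact hlow'
      have h7 : η ^ (j + 1) < η ^ j * b ^ δ.dropLast.length :=
        (h6.trans h5).trans_lt
          (mul_lt_mul_of_pos_right hspec (pow_pos hbpos _))
      have h8 : η < b ^ δ.dropLast.length := by
        have h9 : η ^ j * η < η ^ j * b ^ δ.dropLast.length := by
          rw [← pow_succ]; exact h7
        exact lt_of_mul_lt_mul_left h9 (pow_pos hηpos j).le
      have h10 : δ.dropLast.length < N₁ := hN₁lem _ h8.le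
      have h11 : δ.length = ω.length - (m + 2) := by rw [hδdef, List.length_drop]
      have h12 : δ.dropLast.length = δ.length - 1 := List.length_dropLast
      have h13 : 1 ≤ δ.length := List.length_pos_iff.mpr hδnil
      omega
  have hfinj : (Lambda P c r j).Finite := hfin j hj
  have hfinj1 : (Lambda P c r (j + 1)).Finite := hfin (j + 1) (by omega)
  constructor
  · -- φ_j ≤ φ_{j+1}
    have hext1 : ∀ σ : List (Fin N), ∃ τ,
        σ ∈ Lambda P c r j → τ ∈ Lambda P c r (j + 1) ∧ σ <+: τ := by
      intro σ
      by_cases hσ : σ ∈ Lambda P c r j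
      · obtain ⟨hne, hadm, hlow, hup⟩ := hσ
        have hup' : Wt P c r σ < η ^ j := hup
        have hWp := hWpos σ hadm
        obtain ⟨k, hk⟩ := exists_pow_lt_of_lt_one (div_pos hηj1pos hWp) hblt1
        have hk' : Wt P c r σ * b ^ k < η ^ (j + 1) := by
          rw [lt_div_iff₀ hWp] at hk
          calc Wt P c r σ * b ^ k = b ^ k * Wt P c r σ := mul_comm _ _
            _ < η ^ (j + 1) := hk
        have hdl : η ^ (j + 1) ≤ Wt P c r σ.dropLast := le_trans hη_le_η hlow
        obtain ⟨τ, hτ, hp⟩ := hEXT k σ hne hadm hdl hk'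
        exact ⟨τ, fun _ => ⟨hτ, hp⟩⟩
      · exact ⟨[], fun h => absurd h hσ⟩
    choose F hF using hext1
    apply Set.ncard_le_ncard_of_injOn F (fun σ hσ => (hF σ hσ).1) ?_ hfinj1
    intro σ₁ h₁ σ₂ h₂ heq
    obtain ⟨hτ₁, hp₁⟩ := hF σ₁ h₁
    obtain ⟨hτ₂, hp₂⟩ := hF σ₂ h₂
    rw [heq] at hp₁
    rcases List.prefix_or_prefix_of_prefix hp₁ hp₂ with h | h
    · exact hanti j _ _ h₁ h₂ h
    · exact (hanti j _ _ h₂ h₁ h).symm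
  · -- φ_{j+1} ≤ N^{N₁} φ_j
    choose G hG using hcanon
    set i₀ : Fin N := ⟨0, hNpos⟩ with hi₀
    set T := {l : List (Fin N) | l.length = N₁} with hT
    have hTfin : T.Finite := List.finite_length_eq (Fin N) N₁
    set g : List (Fin N) → List (Fin N) × List (Fin N) := fun ω =>
      (G ω, ω.drop (G ω).length ++ List.replicate (N₁ - (ω.length - (G ω).length)) i₀)
      with hg
    have key : phi P c r (j + 1) ≤ (Lambda P c r j ×ˢ T).ncard := by
      apply Set.ncard_le_ncard_of_injOn g ?_ ?_ (hfinj.prod hTfin)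
      · intro ω hω
        obtain ⟨hmem, hpfx, hlen⟩ := hG ω hω
        refine Set.mem_prod.mpr ⟨hmem, ?_⟩
        simp only [hT, hg, Set.mem_setOf_eq, List.length_append, List.length_replicate,
          List.length_drop]
        have h1 : (G ω).length ≤ ω.length := hpfx.length_le
        omega
      · intro ω₁ h₁ ω₂ h₂ heq
        obtain ⟨hm₁, hp₁, hl₁⟩ := hG ω₁ h₁
        obtain ⟨hm₂, hp₂, hl₂⟩ := hG ω₂ h₂
        have hσeq : G ω₁ = G ω₂ := congrArg Prod.fst heq
        have hLeq := congrArg Prod.snd heq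
        simp only [hg] at hLeq
        have hpref1 : ω₁.drop (G ω₁).length <+:
            (ω₂.drop (G ω₂).length ++ List.replicate (N₁ - (ω₂.length - (G ω₂).length)) i₀) := by
          rw [← hLeq]; exact List.prefix_append _ _
        have hpref2 : ω₂.drop (G ω₂).length <+:
            (ω₂.drop (G ω₂).length ++ List.replicate (N₁ - (ω₂.length - (G ω₂).length)) i₀) :=
          List.prefix_append _ _
        have he₁ : G ω₁ ++ ω₁.drop (G ω₁).length = ω₁ := by
          conv_rhs => rw [← List.take_append_drop (G ω₁).length ω₁]
          congr 1
          exact List.prefix_iff_eq_take.mp hp₁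
        have he₂ : G ω₂ ++ ω₂.drop (G ω₂).length = ω₂ := by
          conv_rhs => rw [← List.take_append_drop (G ω₂).length ω₂]
          congr 1
          exact List.prefix_iff_eq_take.mp hp₂
        rcases List.prefix_or_prefix_of_prefix hpref1 hpref2 with h | h
        · have hw : ω₁ <+: ω₂ := by
            rw [hσeq] at h
            rw [← he₁, ← he₂, hσeq]
            exact (List.prefix_append_right_inj (G ω₂)).mpr h
          exact hanti (j + 1) _ _ h₁ h₂ hw
        · have hw : ω₂ <+: ω₁ := by
            rw [hσeq] at h
            rw [← he₁, ← he₂, hσeq]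
            exact (List.prefix_append_right_inj (G ω₂)).mpr h
          exact (hanti (j + 1) _ _ h₂ h₁ hw).symm
    have hprodcard : (Lambda P c r j ×ˢ T).ncard = (Lambda P c r j).ncard * T.ncard := by
      rw [← Nat.card_coe_set_eq, ← Nat.card_coe_set_eq, ← Nat.card_coe_set_eq,
        Nat.card_congr (Equiv.Set.prod _ _), Nat.card_prod]
    have hTcard : T.ncard = N ^ N₁ := by
      rw [← Nat.card_coe_set_eq]
      have e : ↥T ≃ List.Vector (Fin N) N₁ :=
        ⟨fun x => ⟨x.1, x.2⟩, fun v => ⟨v.1, v.2⟩, fun _ => rfl, fun _ => rfl⟩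
      rw [Nat.card_congr e, Nat.card_eq_fintype_card, card_vector, Fintype.card_fin]
    calc phi P c r (j + 1) ≤ (Lambda P c r j ×ˢ T).ncard := key
      _ = N ^ N₁ * phi P c r j := by
          rw [hprodcard, hTcard, phi]
          ring
end

section
/- There exist constants 0 < C_1 ≤ C_2 such that for all sufficiently large j, C_1 · Σ_{σ∈Λ_{j,r}} p_σ c_σ^r ≤ e_{φ_{j,r},r}(μ)^r ≤ C_2 · Σ_{σ∈Λ_{j,r}} p_σ c_σ^r. -/
open Filter MeasureTheory
open scoped ENNReal

namespace QMAux
open QM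


variable {N : ℕ}

lemma zip_tail_concat {α : Type*} : ∀ (σ : List α) (h : σ ≠ []) (a : α),
    (σ ++ [a]).zip ((σ ++ [a]).tail) = σ.zip σ.tail ++ [(σ.getLast h, a)]
  | [x], _, a => by simp
  | x :: y :: s, _, a => by
    have ih := zip_tail_concat (y :: s) (by simp) a
    show (x, y) :: ((y :: s ++ [a]).zip ((y :: s ++ [a]).tail)) = _
    rw [ih]
    simp [List.getLast]

lemma wprod_nil (M : Matrix (Fin N) (Fin N) ℝ) : wprod M [] = 1 := by simp [wprod]

lemma wprod_singleton (M : Matrix (Fin N) (Fin N) ℝ) (i : Fin N) : wprod M [i] = 1 := by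
  simp [wprod]

lemma wprod_concat (M : Matrix (Fin N) (Fin N) ℝ) {σ : List (Fin N)} (h : σ ≠ []) (a : Fin N) :
    wprod M (σ ++ [a]) = wprod M σ * M (σ.getLast h) a := by
  unfold wprod
  rw [zip_tail_concat σ h a, List.map_append, List.prod_append]
  simp

lemma adm_concat (P : Matrix (Fin N) (Fin N) ℝ) {σ : List (Fin N)} (h : σ ≠ []) (a : Fin N) :
    Adm P (σ ++ [a]) ↔ Adm P σ ∧ 0 < P (σ.getLast h) a := by
  unfold Adm
  rw [List.Chain', List.isChain_append]
  simp [List.Chain', List.getLast?_eq_getLast h]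

lemma Adm.prefix {P : Matrix (Fin N) (Fin N) ℝ} {σ ρ : List (Fin N)} (hσ : Adm P σ)
    (h : ρ <+: σ) : Adm P ρ := List.IsChain.prefix hσ h


open QM

variable {N : ℕ} {P c : Matrix (Fin N) (Fin N) ℝ} {r : ℝ}

/-- the set of edge weights -/
def ES (P c : Matrix (Fin N) (Fin N) ℝ) (r : ℝ) : Set ℝ :=
  {x : ℝ | ∃ i j, 0 < P i j ∧ x = P i j * c i j ^ r}

noncomputable def Theta (P c : Matrix (Fin N) (Fin N) ℝ) (r : ℝ) : ℝ := sSup (ES P c r)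

noncomputable def val (P c : Matrix (Fin N) (Fin N) ℝ) (r : ℝ) (σ : List (Fin N)) : ℝ :=
  wprod P σ * wprod c σ ^ r

lemma ES_finite : (ES P c r).Finite := by
  have : ES P c r ⊆ (Set.range fun p : Fin N × Fin N => P p.1 p.2 * c p.1 p.2 ^ r) := by
    rintro x ⟨i, j, _, rfl⟩; exact ⟨(i, j), rfl⟩
  exact (Set.finite_range _).subset this

section
variable (hN : 2 ≤ N) (hr : 0 < r) (hP0 : ∀ i j, 0 ≤ P i j) (hProw : ∀ i, ∑ j, P i j = 1)
  (hPcard : ∀ i : Fin N, 2 ≤ {j : Fin N | 0 < P i j}.ncard)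
  (hc1 : ∀ i j, 0 < P i j → 0 < c i j ∧ c i j < 1)

include hN hPcard in
lemma ES_nonempty : (ES P c r).Nonempty := by
  have i0 : Fin N := ⟨0, by omega⟩
  obtain ⟨j, hj⟩ := Set.nonempty_of_ncard_ne_zero (s := {j : Fin N | 0 < P i0 j})
    (by have := hPcard i0; omega)
  exact ⟨_, i0, j, hj, rfl⟩

include hr hc1 in
lemma ES_mem_pos {x : ℝ} (hx : x ∈ ES P c r) : 0 < x := by
  obtain ⟨i, j, hij, rfl⟩ := hx
  exact mul_pos hij (Real.rpow_pos_of_pos (hc1 i j hij).1 r)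

include hr hP0 hProw hc1 in
lemma ES_mem_lt_one {x : ℝ} (hx : x ∈ ES P c r) : x < 1 := by
  obtain ⟨i, j, hij, rfl⟩ := hx
  have hP1 : P i j ≤ 1 := by
    rw [← hProw i]
    exact Finset.single_le_sum (fun k _ => hP0 i k) (Finset.mem_univ j)
  have hc : c i j ^ r < 1 := Real.rpow_lt_one (hc1 i j hij).1.le (hc1 i j hij).2 hr
  calc P i j * c i j ^ r ≤ 1 * c i j ^ r := by
        apply mul_le_mul_of_nonneg_right hP1 (Real.rpow_nonneg (hc1 i j hij).1.le r)
    _ < 1 := by simpa using hc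

include hN hr hPcard hc1 in
lemma eta_mem : eta P c r ∈ ES P c r :=
  Set.Nonempty.csInf_mem (ES_nonempty hN hPcard) ES_finite

include hN hr hPcard hc1 in
lemma eta_pos : 0 < eta P c r := ES_mem_pos hr hc1 (eta_mem hN hr hPcard hc1)

include hN hr hP0 hProw hPcard hc1 in
lemma eta_lt_one : eta P c r < 1 :=
  ES_mem_lt_one hr hP0 hProw hc1 (eta_mem hN hr hPcard hc1)

lemma eta_le {x : ℝ} (hx : x ∈ ES P c r) : eta P c r ≤ x :=
  csInf_le (Set.Finite.bddBelow ES_finite) hx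

lemma le_Theta {x : ℝ} (hx : x ∈ ES P c r) : x ≤ Theta P c r :=
  le_csSup (Set.Finite.bddAbove ES_finite) hx

include hN hr hPcard hc1 in
lemma Theta_mem : Theta P c r ∈ ES P c r :=
  Set.Nonempty.csSup_mem (ES_nonempty hN hPcard) ES_finite

include hN hr hPcard hc1 in
lemma Theta_pos : 0 < Theta P c r := ES_mem_pos hr hc1 (Theta_mem hN hr hPcard hc1)

include hN hr hP0 hProw hPcard hc1 in
lemma Theta_lt_one : Theta P c r < 1 :=
  ES_mem_lt_one hr hP0 hProw hc1 (Theta_mem hN hr hPcard hc1)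

include hN hr hPcard hc1 in
lemma eta_le_Theta : eta P c r ≤ Theta P c r := le_Theta (eta_mem hN hr hPcard hc1)

end

end QMAux
section Part3
open QM
namespace QMAux
variable {N : ℕ} {P c : Matrix (Fin N) (Fin N) ℝ} {r : ℝ}

noncomputable def Lam (P c : Matrix (Fin N) (Fin N) ℝ) (r : ℝ) (j : ℕ) : Set (List (Fin N)) :=
  {σ | σ ≠ [] ∧ Adm P σ ∧
    eta P c r ^ j ≤ val P c r σ.dropLast ∧ val P c r σ < eta P c r ^ j}

section
variable (hN : 2 ≤ N) (hr : 0 < r) (hP0 : ∀ i j, 0 ≤ P i j) (hProw : ∀ i, ∑ j, P i j = 1)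
  (hPcard : ∀ i : Fin N, 2 ≤ {j : Fin N | 0 < P i j}.ncard)
  (hc1 : ∀ i j, 0 < P i j → 0 < c i j ∧ c i j < 1)

lemma wprod_pos {M : Matrix (Fin N) (Fin N) ℝ} (hM : ∀ i j, 0 < P i j → 0 < M i j)
    {σ : List (Fin N)} (hadm : Adm P σ) : 0 < wprod M σ := by
  induction σ using List.reverseRecOn with
  | nil => rw [wprod_nil]; norm_num
  | append_singleton τ a ih =>
    rcases eq_or_ne τ [] with rfl | hτ
    · rw [show ([] : List (Fin N)) ++ [a] = [a] by simp, wprod_singleton]; norm_num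
    · obtain ⟨hadm', hedge⟩ := (adm_concat P hτ a).mp hadm
      rw [wprod_concat M hτ a]
      exact mul_pos (ih hadm') (hM _ _ hedge)

include hc1 in
lemma wprodc_pos {σ : List (Fin N)} (hadm : Adm P σ) : 0 < wprod c σ :=
  wprod_pos (fun i j h => (hc1 i j h).1) hadm

include hr hc1 in
lemma val_pos {σ : List (Fin N)} (hadm : Adm P σ) : 0 < val P c r σ :=
  mul_pos (wprod_pos (fun _ _ h => h) hadm)
    (Real.rpow_pos_of_pos (wprodc_pos hc1 hadm) r)

lemma val_nil : val P c r [] = 1 := by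
  simp [val, wprod_nil]

lemma val_singleton (i : Fin N) : val P c r [i] = 1 := by
  simp [val, wprod_singleton]

include hc1 in
lemma val_concat {σ : List (Fin N)} (hσ : σ ≠ []) {a : Fin N} (hadm : Adm P (σ ++ [a])) :
    val P c r (σ ++ [a]) =
      val P c r σ * (P (σ.getLast hσ) a * c (σ.getLast hσ) a ^ r) := by
  obtain ⟨hadm', hedge⟩ := (adm_concat P hσ a).mp hadm
  unfold val
  rw [wprod_concat P hσ a, wprod_concat c hσ a,
    Real.mul_rpow (wprodc_pos hc1 hadm').le (hc1 _ _ hedge).1.le]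
  ring

lemma edge_mem_ES {i a : Fin N} (h : 0 < P i a) : P i a * c i a ^ r ∈ ES P c r :=
  ⟨i, a, h, rfl⟩

include hN hr hP0 hProw hPcard hc1 in
lemma val_prefix_le {ρ ω : List (Fin N)} (hadm : Adm P ω) (hpre : ρ <+: ω) (hρ : ρ ≠ []) :
    val P c r ω ≤ val P c r ρ * Theta P c r ^ (ω.length - ρ.length) := by
  induction ω using List.reverseRecOn with
  | nil => exact absurd (List.prefix_nil.mp hpre) hρ
  | append_singleton τ a ih =>
    rcases List.prefix_concat_iff.mp hpre with rfl | hpre'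
    · simp [le_refl]
    · have hτ : τ ≠ [] := by
        rintro rfl; exact hρ (List.prefix_nil.mp hpre')
      obtain ⟨hadm', hedge⟩ := (adm_concat P hτ a).mp hadm
      have hlen : ρ.length ≤ τ.length := hpre'.length_le
      have hE : P (τ.getLast hτ) a * c (τ.getLast hτ) a ^ r ≤ Theta P c r :=
        le_Theta (edge_mem_ES hedge)
      have hEpos : 0 < P (τ.getLast hτ) a * c (τ.getLast hτ) a ^ r :=
        ES_mem_pos hr hc1 (edge_mem_ES hedge)
      have hτval : 0 < val P c r τ := val_pos hr hc1 hadm'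
      have hρval : 0 < val P c r ρ := val_pos hr hc1 (hadm'.prefix hpre')
      rw [val_concat hc1 hτ hadm]
      calc val P c r τ * (P (τ.getLast hτ) a * c (τ.getLast hτ) a ^ r)
          ≤ (val P c r ρ * Theta P c r ^ (τ.length - ρ.length)) * Theta P c r := by
            exact mul_le_mul (ih hadm' hpre') hE hEpos.le
              (mul_nonneg hρval.le (pow_nonneg (Theta_pos hN hr hPcard hc1).le _))
        _ = val P c r ρ * Theta P c r ^ ((τ ++ [a]).length - ρ.length) := by
            rw [mul_assoc, ← pow_succ]
            congr 2
            simp only [List.length_append, List.length_singleton]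
            omega

include hN hr hP0 hProw hPcard hc1 in
lemma val_prefix_le' {ρ ω : List (Fin N)} (hadm : Adm P ω) (hpre : ρ <+: ω) (hρ : ρ ≠ []) :
    val P c r ω ≤ val P c r ρ := by
  have h := val_prefix_le hN hr hP0 hProw hPcard hc1 hadm hpre hρ
  have hΘ0 : 0 ≤ Theta P c r := (Theta_pos hN hr hPcard hc1).le
  have hΘ1 : Theta P c r ≤ 1 := (Theta_lt_one hN hr hP0 hProw hPcard hc1).le
  calc val P c r ω ≤ val P c r ρ * Theta P c r ^ (ω.length - ρ.length) := h
    _ ≤ val P c r ρ * 1 := by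
        apply mul_le_mul_of_nonneg_left (pow_le_one₀ hΘ0 hΘ1)
          (val_pos hr hc1 (hadm.prefix hpre)).le
    _ = val P c r ρ := mul_one _

include hN hr hP0 hProw hPcard hc1 in
lemma val_le_theta_pow {σ : List (Fin N)} (hσ : σ ≠ []) (hadm : Adm P σ) :
    val P c r σ ≤ Theta P c r ^ (σ.length - 1) := by
  have hpre : [σ.head hσ] <+: σ := by
    conv_rhs => rw [← List.cons_head_tail hσ]
    exact ⟨σ.tail, rfl⟩
  have := val_prefix_le hN hr hP0 hProw hPcard hc1 hadm hpre (by simp)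
  simpa [val_singleton] using this

include hN hr hP0 hProw hPcard hc1 in
lemma val_le_one {σ : List (Fin N)} (hadm : Adm P σ) : val P c r σ ≤ 1 := by
  rcases eq_or_ne σ [] with rfl | hσ
  · rw [val_nil]
  · exact le_trans (val_le_theta_pow hN hr hP0 hProw hPcard hc1 hσ hadm)
      (pow_le_one₀ (Theta_pos hN hr hPcard hc1).le
        (Theta_lt_one hN hr hP0 hProw hPcard hc1).le)

end
end QMAux
end Part3
section Part4
open QM
namespace QMAux
open scoped Classical
variable {N : ℕ} {P c : Matrix (Fin N) (Fin N) ℝ} {r : ℝ}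

section
variable (hN : 2 ≤ N) (hr : 0 < r) (hP0 : ∀ i j, 0 ≤ P i j) (hProw : ∀ i, ∑ j, P i j = 1)
  (hPcard : ∀ i : Fin N, 2 ≤ {j : Fin N | 0 < P i j}.ncard)
  (hc1 : ∀ i j, 0 < P i j → 0 < c i j ∧ c i j < 1)

lemma mem_Lam_iff {j : ℕ} {σ : List (Fin N)} :
    σ ∈ Lam P c r j ↔ σ ≠ [] ∧ Adm P σ ∧
      eta P c r ^ j ≤ val P c r σ.dropLast ∧ val P c r σ < eta P c r ^ j := Iff.rfl

include hr hc1 in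
lemma exists_crossing {j : ℕ} (hj : eta P c r ^ j ≤ 1) {σ : List (Fin N)} (hσ : σ ≠ [])
    (hadm : Adm P σ) (hval : val P c r σ < eta P c r ^ j) :
    ∃ ρ ∈ Lam P c r j, ρ <+: σ := by
  have hex : ∃ m, val P c r (σ.take m) < eta P c r ^ j := by
    exact ⟨σ.length, by rwa [List.take_length]⟩
  set m₀ := Nat.find hex with hm₀def
  have hspec : val P c r (σ.take m₀) < eta P c r ^ j := Nat.find_spec hex
  have hlen : m₀ ≤ σ.length := Nat.find_le (by rwa [List.take_length])
  have h0 : m₀ ≠ 0 := by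
    intro h
    rw [h] at hspec
    simp only [List.take_zero, val_nil] at hspec
    linarith
  have h1 : m₀ ≠ 1 := by
    intro h
    rw [h] at hspec
    rw [List.take_one, List.head?_eq_head hσ] at hspec
    simp only [Option.toList_some, val_singleton] at hspec
    linarith
  have h2 : 2 ≤ m₀ := by omega
  refine ⟨σ.take m₀, ?_, List.take_prefix _ _⟩
  have htake : σ.take m₀ = σ.take (m₀ - 1) ++ [σ.get ⟨m₀ - 1, by omega⟩] := by
    conv_lhs => rw [show m₀ = (m₀ - 1) + 1 by omega]
    rw [List.take_succ]
    congr 1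
    rw [List.getElem?_eq_getElem (by omega)]
    simp [List.get_eq_getElem]
  refine ⟨?_, hadm.prefix (List.take_prefix _ _), ?_, hspec⟩
  · intro h
    have := congrArg List.length h
    simp only [List.length_take, List.length_nil] at this
    omega
  · rw [htake, List.dropLast_concat]
    have := Nat.find_min hex (m := m₀ - 1) (by omega)
    linarith [not_lt.mp this]

include hN hr hP0 hProw hPcard hc1 in
lemma Lam_antichain {j : ℕ} {σ ω : List (Fin N)} (hσ : σ ∈ Lam P c r j)
    (hω : ω ∈ Lam P c r j) (hpre : σ <+: ω) : σ = ω := by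
  by_contra hne
  obtain ⟨hω0, hωadm, hω1, _⟩ := hω
  obtain ⟨hσ0, _, _, hσ2⟩ := hσ
  rcases List.eq_nil_or_concat ω with rfl | ⟨τ, b, rfl⟩
  · exact hω0 rfl
  rw [List.concat_eq_append] at *
  rcases List.prefix_concat_iff.mp hpre with rfl | hpre'
  · exact hne rfl
  · rw [List.dropLast_concat] at hω1
    have hτadm : Adm P τ := hωadm.prefix (List.prefix_append _ _)
    have := val_prefix_le' hN hr hP0 hProw hPcard hc1 hτadm hpre' hσ0
    linarith

include hN hr hP0 hProw hPcard hc1 in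
lemma Lam_prefix_unique {j : ℕ} {σ ρ ρ' : List (Fin N)} (hρ : ρ ∈ Lam P c r j)
    (hρ' : ρ' ∈ Lam P c r j) (h1 : ρ <+: σ) (h2 : ρ' <+: σ) : ρ = ρ' := by
  rcases List.prefix_or_prefix_of_prefix h1 h2 with h | h
  · exact Lam_antichain hN hr hP0 hProw hPcard hc1 hρ hρ' h
  · exact (Lam_antichain hN hr hP0 hProw hPcard hc1 hρ' hρ h).symm

include hN hr hP0 hProw hPcard hc1 in
lemma Lam_finite (j : ℕ) : (Lam P c r j).Finite := by
  have hηj : 0 < eta P c r ^ j := pow_pos (eta_pos hN hr hPcard hc1) j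
  obtain ⟨K, hK⟩ := exists_pow_lt_of_lt_one hηj (Theta_lt_one hN hr hP0 hProw hPcard hc1)
  apply (List.finite_length_le (Fin N) (K + 2)).subset
  rintro σ ⟨hσ0, hadm, hσ1, _⟩
  simp only [Set.mem_setOf_eq]
  by_contra hlong
  push_neg at hlong
  have hd0 : σ.dropLast ≠ [] := by
    intro h
    have := congrArg List.length h
    rw [List.length_dropLast] at this
    simp at this
    omega
  have hdadm : Adm P σ.dropLast := hadm.prefix (List.dropLast_prefix σ)
  have hble := val_le_theta_pow hN hr hP0 hProw hPcard hc1 hd0 hdadm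
  have hlen : K + 1 ≤ σ.dropLast.length - 1 := by
    rw [List.length_dropLast]; omega
  have hmono : Theta P c r ^ (σ.dropLast.length - 1) ≤ Theta P c r ^ K :=
    pow_le_pow_of_le_one (Theta_pos hN hr hPcard hc1).le
      (Theta_lt_one hN hr hP0 hProw hPcard hc1).le (by omega)
  linarith

include hN hr hP0 hProw hPcard hc1 in
lemma Lam_val_lower {j : ℕ} (hj : 1 ≤ j) {σ : List (Fin N)} (hσ : σ ∈ Lam P c r j) :
    eta P c r ^ (j + 1) ≤ val P c r σ := by
  obtain ⟨hσ0, hadm, hσ1, hσ2⟩ := hσ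
  have hη1 : eta P c r < 1 := eta_lt_one hN hr hP0 hProw hPcard hc1
  have hη0 : 0 < eta P c r := eta_pos hN hr hPcard hc1
  rcases List.eq_nil_or_concat σ with rfl | ⟨τ, b, rfl⟩
  · exact absurd rfl hσ0
  rw [List.concat_eq_append] at *
  have hτ : τ ≠ [] := by
    rintro rfl
    rw [show ([] : List (Fin N)) ++ [b] = [b] from rfl, val_singleton] at hσ2
    have : eta P c r ^ j < 1 := pow_lt_one₀ hη0.le hη1 (by omega)
    linarith
  obtain ⟨hτadm, hedge⟩ := (adm_concat P hτ b).mp hadm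
  rw [List.dropLast_concat] at hσ1
  rw [val_concat hc1 hτ hadm, pow_succ]
  exact mul_le_mul hσ1 (eta_le (edge_mem_ES hedge)) hη0.le
    (val_pos hr hc1 hτadm).le

include hPcard in
lemma exists_next : ∀ i : Fin N, ∃ k : Fin N, 0 < P i k := by
  intro i
  obtain ⟨k, hk⟩ := Set.nonempty_of_ncard_ne_zero (s := {k : Fin N | 0 < P i k})
    (by have := hPcard i; omega)
  exact ⟨k, hk⟩

include hPcard in
lemma exists_ext {τ : List (Fin N)} (hτ : τ ≠ []) (hadm : Adm P τ) (k : ℕ) :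
    ∃ ω, Adm P ω ∧ τ <+: ω ∧ ω.length = τ.length + k := by
  induction k with
  | zero => exact ⟨τ, hadm, List.prefix_refl τ, rfl⟩
  | succ k ih =>
    obtain ⟨ω, hωadm, hωpre, hωlen⟩ := ih
    have hω0 : ω ≠ [] := by
      intro h; rw [h] at hωpre; exact hτ (List.prefix_nil.mp hωpre)
    obtain ⟨a, ha⟩ := exists_next hPcard (ω.getLast hω0)
    refine ⟨ω ++ [a], (adm_concat P hω0 a).mpr ⟨hωadm, ha⟩,
      hωpre.trans (List.prefix_append _ _), ?_⟩
    simp [hωlen]; omega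

include hN hr hP0 hProw hPcard hc1 in
lemma exists_descend {m : ℕ} {τ : List (Fin N)} (hτ : τ ≠ []) (hadm : Adm P τ)
    (hval : eta P c r ^ m < val P c r τ) :
    ∃ ω ∈ Lam P c r m, τ <+: ω := by
  have hτval : 0 < val P c r τ := val_pos hr hc1 hadm
  have hηm : 0 < eta P c r ^ m := pow_pos (eta_pos hN hr hPcard hc1) m
  obtain ⟨k, hk⟩ := exists_pow_lt_of_lt_one (div_pos hηm hτval)
    (Theta_lt_one hN hr hP0 hProw hPcard hc1)
  obtain ⟨ω', hω'adm, hω'pre, hω'len⟩ := exists_ext hPcard hτ hadm k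
  have hω'0 : ω' ≠ [] := by
    intro h; rw [h] at hω'pre; exact hτ (List.prefix_nil.mp hω'pre)
  have hval' : val P c r ω' < eta P c r ^ m := by
    have h1 := val_prefix_le hN hr hP0 hProw hPcard hc1 hω'adm hω'pre hτ
    have h2 : Theta P c r ^ (ω'.length - τ.length) = Theta P c r ^ k := by
      rw [hω'len]; congr 1; omega
    rw [h2] at h1
    calc val P c r ω' ≤ val P c r τ * Theta P c r ^ k := h1
      _ < val P c r τ * (eta P c r ^ m / val P c r τ) :=
          mul_lt_mul_of_pos_left hk hτval
      _ = eta P c r ^ m := by field_simp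
  have hm1 : eta P c r ^ m ≤ 1 :=
    le_trans hval.le (val_le_one hN hr hP0 hProw hPcard hc1 hadm)
  obtain ⟨ρ, hρmem, hρpre⟩ := exists_crossing hr hc1 hm1 hω'0 hω'adm hval'
  refine ⟨ρ, hρmem, ?_⟩
  rcases List.prefix_or_prefix_of_prefix hω'pre hρpre with h | h
  · exact h
  · exfalso
    have := val_prefix_le' hN hr hP0 hProw hPcard hc1 hadm h hρmem.1
    have := hρmem.2.2.2
    linarith

include hN hr hPcard hc1 in
lemma Lam_nonempty {j : ℕ} (hj : 1 ≤ j) (hP0 : ∀ i j, 0 ≤ P i j)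
    (hProw : ∀ i, ∑ j, P i j = 1) : (Lam P c r j).Nonempty := by
  have i0 : Fin N := ⟨0, by omega⟩
  have h1 : eta P c r ^ j < val P c r [i0] := by
    rw [val_singleton]
    exact pow_lt_one₀ (eta_pos hN hr hPcard hc1).le
      (eta_lt_one hN hr hP0 hProw hPcard hc1) (by omega)
  obtain ⟨ω, hω, _⟩ := exists_descend hN hr hP0 hProw hPcard hc1 (by simp)
    (List.isChain_singleton i0) h1
  exact ⟨ω, hω⟩

end
end QMAux
end Part4
section Part5
open QM
namespace QMAux
open scoped Classical
variable {N : ℕ} {P c : Matrix (Fin N) (Fin N) ℝ} {r : ℝ}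

section
variable (hN : 2 ≤ N) (hr : 0 < r) (hP0 : ∀ i j, 0 ≤ P i j) (hProw : ∀ i, ∑ j, P i j = 1)
  (hPcard : ∀ i : Fin N, 2 ≤ {j : Fin N | 0 < P i j}.ncard)
  (hc1 : ∀ i j, 0 < P i j → 0 < c i j ∧ c i j < 1)

include hN hr hP0 hProw hPcard hc1 in
lemma Lam_growth {j : ℕ} (hj : 1 ≤ j) :
    2 * (Lam P c r j).ncard ≤ (Lam P c r (j + 3)).ncard := by
  have hη0 : 0 < eta P c r := eta_pos hN hr hPcard hc1
  have hη1 : eta P c r < 1 := eta_lt_one hN hr hP0 hProw hPcard hc1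
  -- two distinct successors
  have hsucc : ∀ i : Fin N, ∃ u v : Fin N, u ≠ v ∧ 0 < P i u ∧ 0 < P i v := by
    intro i
    obtain ⟨u, v, hu, hv, huv⟩ := (Set.one_lt_ncard_iff (s := {k : Fin N | 0 < P i k})
      (Set.toFinite _)).mp (by have := hPcard i; omega)
    exact ⟨u, v, huv, hu, hv⟩
  choose uF vF huv hu hv using hsucc
  -- for σ ∈ Λ_j and valid successor x, get ω ∈ Λ_{j+3} extending σ ++ [x]
  have key : ∀ σ (hσ : σ ∈ Lam P c r j) (x : Fin N), 0 < P (σ.getLast hσ.1) x →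
      ∃ ω ∈ Lam P c r (j + 3), (σ ++ [x]) <+: ω := by
    intro σ hσ x hx
    have hadm' : Adm P (σ ++ [x]) := (adm_concat P hσ.1 x).mpr ⟨hσ.2.1, hx⟩
    apply exists_descend hN hr hP0 hProw hPcard hc1 (by simp) hadm'
    have h1 : eta P c r ^ (j + 1) ≤ val P c r σ :=
      Lam_val_lower hN hr hP0 hProw hPcard hc1 hj hσ
    have h2 : eta P c r ≤ P (σ.getLast hσ.1) x * c (σ.getLast hσ.1) x ^ r :=
      eta_le (edge_mem_ES hx)
    have h3 : val P c r (σ ++ [x]) =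
        val P c r σ * (P (σ.getLast hσ.1) x * c (σ.getLast hσ.1) x ^ r) :=
      val_concat hc1 hσ.1 hadm'
    calc eta P c r ^ (j + 3) < eta P c r ^ (j + 2) :=
          pow_lt_pow_right_of_lt_one₀ hη0 hη1 (by omega)
      _ = eta P c r ^ (j + 1) * eta P c r := by ring
      _ ≤ val P c r σ * (P (σ.getLast hσ.1) x * c (σ.getLast hσ.1) x ^ r) :=
          mul_le_mul h1 h2 hη0.le (val_pos hr hc1 hσ.2.1).le
      _ = val P c r (σ ++ [x]) := h3.symm
  have key2 : ∀ σ (hσ : σ ∈ Lam P c r j) (i : Fin 2),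
      ∃ ω ∈ Lam P c r (j + 3),
        (σ ++ [if i = 0 then uF (σ.getLast hσ.1) else vF (σ.getLast hσ.1)]) <+: ω := by
    intro σ hσ i
    rcases eq_or_ne i 0 with rfl | hi
    · simpa using key σ hσ _ (hu _)
    · simp only [if_neg hi]
      exact key σ hσ _ (hv _)
  choose F hFmem hFpre using key2
  have hfinj := Lam_finite hN hr hP0 hProw hPcard hc1 (P := P) (c := c) (r := r) j
  have hfinj3 := Lam_finite hN hr hP0 hProw hPcard hc1 (P := P) (c := c) (r := r) (j + 3)
  rw [Set.ncard_eq_toFinset_card _ hfinj, Set.ncard_eq_toFinset_card _ hfinj3]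
  set Γ := hfinj.toFinset
  set Γ' := hfinj3.toFinset
  -- injection from Γ ×ˢ univ (Fin 2) into Γ'
  have hcard : (Γ ×ˢ (Finset.univ : Finset (Fin 2))).card = 2 * Γ.card := by
    rw [Finset.card_product]
    simp [mul_comm]
  rw [← hcard]
  set f : List (Fin N) × Fin 2 → List (Fin N) := fun p =>
    if h : p.1 ∈ Lam P c r j then F p.1 h p.2 else []
  apply Finset.card_le_card_of_injOn f
  · rintro ⟨σ, i⟩ hp
    have hσ : σ ∈ Lam P c r j := by
      have := (Finset.mem_product.mp hp).1
      rwa [Set.Finite.mem_toFinset] at this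
    simp only [f, dif_pos hσ]
    rw [Finset.mem_coe, Set.Finite.mem_toFinset]
    exact hFmem σ hσ i
  · rintro ⟨σ, i⟩ hp ⟨σ', i'⟩ hp' heq
    have hσ : σ ∈ Lam P c r j := by
      have := (Finset.mem_product.mp (Finset.mem_coe.mp hp)).1
      rwa [Set.Finite.mem_toFinset] at this
    have hσ' : σ' ∈ Lam P c r j := by
      have := (Finset.mem_product.mp (Finset.mem_coe.mp hp')).1
      rwa [Set.Finite.mem_toFinset] at this
    simp only [f, dif_pos hσ, dif_pos hσ'] at heq
    -- the images are prefixed by σ ++ [...] and σ' ++ [...]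
    have hpre1 : σ <+: F σ hσ i := (List.prefix_append σ _).trans (hFpre σ hσ i)
    have hpre2 : σ' <+: F σ hσ i := by
      rw [heq]
      exact (List.prefix_append σ' _).trans (hFpre σ' hσ' i')
    have hσeq : σ = σ' := Lam_prefix_unique hN hr hP0 hProw hPcard hc1 hσ hσ' hpre1 hpre2
    subst hσeq
    -- now show i = i'
    have hiq : i = i' := by
      by_contra hii
      have t1 := hFpre σ hσ i
      have t2 := hFpre σ hσ i'
      rw [← heq] at t2
      have e1 := List.prefix_iff_eq_take.mp t1
      have e2 := List.prefix_iff_eq_take.mp t2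
      rw [List.length_append, List.length_singleton] at e1 e2
      have : (σ ++ [if i = 0 then uF (σ.getLast hσ.1) else vF (σ.getLast hσ.1)]) =
          (σ ++ [if i' = 0 then uF (σ.getLast hσ.1) else vF (σ.getLast hσ.1)]) := by
        rw [e1, e2]
      have hlast := List.append_inj_right this rfl
      have : (if i = 0 then uF (σ.getLast hσ.1) else vF (σ.getLast hσ.1)) =
          (if i' = 0 then uF (σ.getLast hσ.1) else vF (σ.getLast hσ.1)) := by
        simpa using hlast
      -- i ≠ i' in Fin 2 means one is 0, other is 1
      rcases eq_or_ne i 0 with rfl | hi0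
      · have hi'0 : i' ≠ 0 := fun h => hii h.symm
        rw [if_pos rfl, if_neg hi'0] at this
        exact huv _ this
      · have hi'0 : i' = 0 := by omega
        subst hi'0
        rw [if_neg hi0, if_pos rfl] at this
        exact huv _ this.symm
    rw [hiq]

include hN hr hP0 hProw hPcard hc1 in
lemma Lam_growth_pow {j : ℕ} (hj : 1 ≤ j) (k : ℕ) :
    2 ^ k * (Lam P c r j).ncard ≤ (Lam P c r (j + 3 * k)).ncard := by
  induction k with
  | zero => simp
  | succ k ih =>
    have h1 : 2 ^ (k + 1) * (Lam P c r j).ncard =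
        2 * (2 ^ k * (Lam P c r j).ncard) := by ring
    rw [h1]
    calc 2 * (2 ^ k * (Lam P c r j).ncard) ≤ 2 * (Lam P c r (j + 3 * k)).ncard := by omega
      _ ≤ (Lam P c r (j + 3 * k + 3)).ncard :=
          Lam_growth hN hr hP0 hProw hPcard hc1 (by omega)
      _ = (Lam P c r (j + 3 * (k + 1))).ncard := by ring_nf

end
end QMAux
end Part5
section Part6
open QM Metric
namespace QMAux
open scoped Classical
variable {q N : ℕ} {P c : Matrix (Fin N) (Fin N) ℝ} {r : ℝ}
  {J : List (Fin N) → Set (EuclideanSpace ℝ (Fin q))}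

section
variable
  (hJ : ∀ σ : List (Fin N), σ ≠ [] → Adm P σ →
      IsCompact (J σ) ∧ (J σ).Nonempty ∧ J σ = closure (interior (J σ)))
  (hJdiam1 : ∀ i : Fin N, Metric.diam (J [i]) = 1)
  (hJsub : ∀ (σ : List (Fin N)) (a : Fin N), σ ≠ [] → Adm P (σ ++ [a]) →
      J (σ ++ [a]) ⊆ J σ)
  (hJdiam : ∀ (σ : List (Fin N)) (a : Fin N) (h : σ ≠ []), Adm P (σ ++ [a]) →
      Metric.diam (J (σ ++ [a])) = c (σ.getLast h) a * Metric.diam (J σ))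

include hJdiam1 hJdiam in
lemma J_diam_eq : ∀ {σ : List (Fin N)}, σ ≠ [] → Adm P σ →
    Metric.diam (J σ) = wprod c σ := by
  intro σ
  induction σ using List.reverseRecOn with
  | nil => intro h; exact absurd rfl h
  | append_singleton τ a ih =>
    intro _ hadm
    rcases eq_or_ne τ [] with rfl | hτ
    · rw [show ([] : List (Fin N)) ++ [a] = [a] from rfl, wprod_singleton]
      exact hJdiam1 a
    · obtain ⟨hadm', _⟩ := (adm_concat P hτ a).mp hadm
      rw [hJdiam τ a hτ hadm, ih hτ hadm', wprod_concat c hτ a]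
      ring

include hJsub in
lemma J_mono : ∀ {σ ρ : List (Fin N)}, ρ ≠ [] → ρ <+: σ → Adm P σ → J σ ⊆ J ρ := by
  intro σ
  induction σ using List.reverseRecOn with
  | nil => intro ρ hρ hpre _; exact absurd (List.prefix_nil.mp hpre) hρ
  | append_singleton τ a ih =>
    intro ρ hρ hpre hadm
    rcases List.prefix_concat_iff.mp hpre with rfl | hpre'
    · exact le_refl _
    · have hτ : τ ≠ [] := by
        rintro rfl; exact hρ (List.prefix_nil.mp hpre')
      obtain ⟨hadm', _⟩ := (adm_concat P hτ a).mp hadm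
      exact (hJsub τ a hτ hadm).trans (ih hρ hpre' hadm')

include hJ hJsub in
lemma J_separation {t : ℝ} (ht : 0 < t)
    (hsep : ∀ (σ : List (Fin N)) (a b : Fin N), σ ≠ [] → a ≠ b →
      Adm P (σ ++ [a]) → Adm P (σ ++ [b]) →
      ∀ x ∈ J (σ ++ [a]), ∀ y ∈ J (σ ++ [b]),
        t * max (Metric.diam (J (σ ++ [a]))) (Metric.diam (J (σ ++ [b]))) ≤ dist x y)
    {σ ω : List (Fin N)} (hσ0 : σ ≠ []) (hω0 : ω ≠ [])
    (hσadm : Adm P σ) (hωadm : Adm P ω)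
    (h1 : ¬ σ <+: ω) (h2 : ¬ ω <+: σ)
    (hhead : σ.head hσ0 = ω.head hω0) :
    ∀ x ∈ J σ, ∀ y ∈ J ω, t * max (Metric.diam (J σ)) (Metric.diam (J ω)) ≤ dist x y := by
  intro x hx y hy
  -- find the first index where σ and ω differ
  have hex : ∃ m, σ.take m ≠ ω.take m := by
    refine ⟨min σ.length ω.length, ?_⟩
    intro h
    rcases le_total σ.length ω.length with hle | hle
    · rw [min_eq_left hle, List.take_length] at h
      exact h1 (List.prefix_iff_eq_take.mpr h)
    · rw [min_eq_right hle] at h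
      rw [List.take_length] at h
      exact h2 (List.prefix_iff_eq_take.mpr h.symm)
  set m₀ := Nat.find hex with hm₀def
  have hspec : σ.take m₀ ≠ ω.take m₀ := Nat.find_spec hex
  have h0 : m₀ ≠ 0 := by
    intro h; rw [h] at hspec; simp at hspec
  have hm1 : m₀ ≠ 1 := by
    intro h
    rw [h, List.take_one, List.take_one, List.head?_eq_head hσ0, List.head?_eq_head hω0,
      hhead] at hspec
    exact hspec rfl
  have h2m : 2 ≤ m₀ := by omega
  have heqtake : σ.take (m₀ - 1) = ω.take (m₀ - 1) := by
    by_contra h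
    exact Nat.find_min hex (m := m₀ - 1) (by omega) h
  have hσlen : m₀ ≤ σ.length := by
    by_contra h
    push_neg at h
    have he : σ.take (m₀ - 1) = σ := List.take_of_length_le (by omega)
    apply h1
    rw [← he, heqtake]
    exact List.take_prefix _ _
  have hωlen : m₀ ≤ ω.length := by
    by_contra h
    push_neg at h
    have he : ω.take (m₀ - 1) = ω := List.take_of_length_le (by omega)
    apply h2
    rw [← he, ← heqtake]
    exact List.take_prefix _ _
  set ρ := σ.take (m₀ - 1) with hρdef
  have hρlen : ρ.length = m₀ - 1 := by
    rw [hρdef, List.length_take]; omega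
  have hρ0 : ρ ≠ [] := by
    intro h
    have := congrArg List.length h
    rw [hρlen] at this
    simp at this
    omega
  set a := σ.get ⟨m₀ - 1, by omega⟩ with hadef
  set b := ω.get ⟨m₀ - 1, by omega⟩ with hbdef
  have htakeσ : σ.take m₀ = ρ ++ [a] := by
    conv_lhs => rw [show m₀ = (m₀ - 1) + 1 by omega]
    rw [List.take_succ, List.getElem?_eq_getElem (by omega)]
    simp [hρdef, hadef, List.get_eq_getElem]
  have htakeω : ω.take m₀ = ρ ++ [b] := by
    conv_lhs => rw [show m₀ = (m₀ - 1) + 1 by omega]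
    rw [List.take_succ, List.getElem?_eq_getElem (by omega), heqtake]
    simp [hbdef, List.get_eq_getElem]
  have hab : a ≠ b := by
    intro h
    apply hspec
    rw [htakeσ, htakeω, h]
  have hadmA : Adm P (ρ ++ [a]) := by
    rw [← htakeσ]; exact hσadm.prefix (List.take_prefix _ _)
  have hadmB : Adm P (ρ ++ [b]) := by
    rw [← htakeω]; exact hωadm.prefix (List.take_prefix _ _)
  have hsubA : J σ ⊆ J (ρ ++ [a]) := by
    apply J_mono hJsub (by simp) _ hσadm
    rw [← htakeσ]; exact List.take_prefix _ _
  have hsubB : J ω ⊆ J (ρ ++ [b]) := by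
    apply J_mono hJsub (by simp) _ hωadm
    rw [← htakeω]; exact List.take_prefix _ _
  have hsepr := hsep ρ a b hρ0 hab hadmA hadmB x (hsubA hx) y (hsubB hy)
  refine le_trans ?_ hsepr
  apply mul_le_mul_of_nonneg_left _ ht.le
  apply max_le_max
  · exact diam_mono hsubA (hJ _ (by simp) hadmA).1.isBounded
  · exact diam_mono hsubB (hJ _ (by simp) hadmB).1.isBounded

end
end QMAux
end Part6
section Part7
open MeasureTheory Metric
namespace QMAux

lemma integrable_of_compact_carrier {X : Type*} [MeasurableSpace X] [MetricSpace X]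
    [BorelSpace X] {μ : Measure X} [IsProbabilityMeasure μ]
    {K : Set X} (hK : IsCompact K) (hKc : μ Kᶜ = 0) {f : X → ℝ} (hf : Continuous f) :
    Integrable f μ := by
  obtain ⟨C, hC⟩ := hK.exists_bound_of_continuousOn hf.continuousOn
  have hKm : MeasurableSet K := hK.measurableSet
  have h1 : Integrable (K.indicator f) μ := by
    apply Integrable.mono' (integrable_const (max C 0))
      (hf.aestronglyMeasurable.indicator hKm)
    filter_upwards with x
    by_cases hx : x ∈ K
    · rw [Set.indicator_of_mem hx]
      exact le_trans (hC x hx) (le_max_left _ _)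
    · rw [Set.indicator_of_notMem hx]
      simp
  have h2 : f =ᵐ[μ] K.indicator f := by
    have hae : ∀ᵐ x ∂μ, x ∈ K := by
      rw [Filter.eventually_iff, mem_ae_iff]
      simpa using hKc
    filter_upwards [hae] with x hx
    rw [Set.indicator_of_mem hx]
  exact h1.congr h2.symm

end QMAux
end Part7


section MainAux
open QM QMAux Metric MeasureTheory
set_option maxHeartbeats 2000000 in
theorem quantErr_comparable_to_sum_aux
    {q : ℕ}
    {N : ℕ} (hN : 2 ≤ N)
    (P c : Matrix (Fin N) (Fin N) ℝ) (r : ℝ) (hr : 0 < r)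
    (hP0 : ∀ i j, 0 ≤ P i j)
    (hProw : ∀ i, ∑ j, P i j = 1)
    (hPcard : ∀ i : Fin N, 2 ≤ {j : Fin N | 0 < P i j}.ncard)
    (hc1 : ∀ i j, 0 < P i j → 0 < c i j ∧ c i j < 1)
    (hc0 : ∀ i j, P i j = 0 → c i j = 0)
    (J : List (Fin N) → Set (EuclideanSpace ℝ (Fin q)))
    (hJ : ∀ σ : List (Fin N), σ ≠ [] → QM.Adm P σ →
      IsCompact (J σ) ∧ (J σ).Nonempty ∧ J σ = closure (interior (J σ)))
    (hJdiam1 : ∀ i : Fin N, Metric.diam (J [i]) = 1)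
    (hJsub : ∀ (σ : List (Fin N)) (a : Fin N), σ ≠ [] → QM.Adm P (σ ++ [a]) →
      J (σ ++ [a]) ⊆ J σ)
    (hJdisj : ∀ (σ : List (Fin N)) (a b : Fin N), σ ≠ [] → a ≠ b →
      QM.Adm P (σ ++ [a]) → QM.Adm P (σ ++ [b]) →
      Disjoint (interior (J (σ ++ [a]))) (interior (J (σ ++ [b]))))
    (hJdiam : ∀ (σ : List (Fin N)) (a : Fin N) (h : σ ≠ []), QM.Adm P (σ ++ [a]) →
      Metric.diam (J (σ ++ [a])) = c (σ.getLast h) a * Metric.diam (J σ))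
    (hsep : ∃ t : ℝ, 0 < t ∧ t < 1 ∧ ∀ (σ : List (Fin N)) (a b : Fin N), σ ≠ [] → a ≠ b →
      QM.Adm P (σ ++ [a]) → QM.Adm P (σ ++ [b]) →
      ∀ x ∈ J (σ ++ [a]), ∀ y ∈ J (σ ++ [b]),
        t * max (Metric.diam (J (σ ++ [a]))) (Metric.diam (J (σ ++ [b]))) ≤ dist x y)
    (χ : Fin N → ℝ) (hχpos : ∀ i, 0 < χ i) (hχsum : ∑ i, χ i = 1)
    (μ : Measure (EuclideanSpace ℝ (Fin q))) (hprob : IsProbabilityMeasure μ)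
    (hμE : μ (⋂ k : ℕ, ⋃ (σ : List (Fin N)) (_ : σ.length = k + 1 ∧ QM.Adm P σ), J σ) = 1)
    (hμJ : ∀ (σ : List (Fin N)) (h : σ ≠ []), QM.Adm P σ →
      μ (J σ) = ENNReal.ofReal (χ (σ.head h) * QM.wprod P σ))
    :
    ∃ C₁ C₂ : ℝ, 0 < C₁ ∧ C₁ ≤ C₂ ∧ ∃ j₀ : ℕ, ∀ j : ℕ, j₀ ≤ j →
      C₁ * (∑ᶠ σ ∈ QM.Lambda P c r j, QM.wprod P σ * QM.wprod c σ ^ r) ≤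
          QM.quantErr μ r (QM.phi P c r j) ^ r ∧
      QM.quantErr μ r (QM.phi P c r j) ^ r ≤
          C₂ * (∑ᶠ σ ∈ QM.Lambda P c r j, QM.wprod P σ * QM.wprod c σ ^ r) := by
  classical
  obtain ⟨t, ht0, ht1, hsept⟩ := hsep
  have hNpos : (0:ℕ) < N := by omega
  haveI : Inhabited (Fin N) := ⟨⟨0, by omega⟩⟩
  have hheadI : ∀ (l : List (Fin N)) (h : l ≠ []), l.headI = l.head h := by
    intro l h
    cases l with
    | nil => simp at h
    | cons a s => rfl
  set η := QM.eta P c r with hηdef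
  have hη0 : 0 < η := eta_pos hN hr hPcard hc1
  have hη1 : η < 1 := eta_lt_one hN hr hP0 hProw hPcard hc1
  have hfin : ∀ j, (Lam P c r j).Finite := Lam_finite hN hr hP0 hProw hPcard hc1
  -- minimum of χ
  obtain ⟨im, _, him⟩ := Finset.exists_min_image Finset.univ χ
    ⟨⟨0, by omega⟩, Finset.mem_univ _⟩
  set χm := χ im with hχmdef
  have hχm0 : 0 < χm := hχpos im
  have hχmle : ∀ i, χm ≤ χ i := fun i => him i (Finset.mem_univ i)
  have hχle1 : ∀ i, χ i ≤ 1 := by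
    intro i
    rw [← hχsum]
    exact Finset.single_le_sum (fun k _ => (hχpos k).le) (Finset.mem_univ i)
  have ht2 : 0 < t/2 := by linarith
  have htr0 : 0 < (t/2) ^ r := Real.rpow_pos_of_pos ht2 r
  -- the constant
  set C₁ : ℝ := χm * (t/2) ^ r * η ^ (3*N+1) / N with hC₁def
  have hC₁0 : 0 < C₁ := by
    apply div_pos _ (by exact_mod_cast hNpos)
    exact mul_pos (mul_pos hχm0 htr0) (pow_pos hη0 _)
  refine ⟨C₁, 1, hC₁0, ?_, 1, ?_⟩
  · -- C₁ ≤ 1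
    have h1 : (t/2) ^ r ≤ 1 := Real.rpow_le_one ht2.le (by linarith) hr.le
    have h2 : η ^ (3*N+1) ≤ 1 := pow_le_one₀ hη0.le hη1.le
    have h3 : χm ≤ 1 := hχle1 im
    have hX : χm * (t/2) ^ r * η ^ (3*N+1) ≤ 1 := by
      calc χm * (t/2) ^ r * η ^ (3*N+1) ≤ 1 * 1 * 1 := by
            apply mul_le_mul (mul_le_mul h3 h1 htr0.le (by linarith)) h2
              (pow_pos hη0 _).le (by linarith)
      _ = 1 := by ring
    have hN1 : (1:ℝ) ≤ N := by exact_mod_cast hNpos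
    calc C₁ ≤ χm * (t/2) ^ r * η ^ (3*N+1) :=
          div_le_self (by positivity) hN1
      _ ≤ 1 := hX
  intro j hj
  -- global measure-theoretic setup
  have hAk1 : ∀ k, μ (⋃ (σ : List (Fin N)) (_ : σ.length = k + 1 ∧ QM.Adm P σ), J σ) = 1 := by
    intro k
    refine le_antisymm prob_le_one ?_
    rw [← hμE]
    exact measure_mono (Set.iInter_subset _ k)
  set K : Set (EuclideanSpace ℝ (Fin q)) := ⋃ i : Fin N, J [i] with hKdef
  have hKcomp : IsCompact K :=
    isCompact_iUnion (fun i => (hJ [i] (by simp) (List.isChain_singleton i)).1)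
  have hK1 : μ K = 1 := by
    refine le_antisymm prob_le_one ?_
    rw [← hAk1 0]
    apply measure_mono
    intro x hx
    rw [Set.mem_iUnion] at hx
    obtain ⟨σ, hx⟩ := hx
    rw [Set.mem_iUnion] at hx
    obtain ⟨⟨hlen, _⟩, hxJ⟩ := hx
    obtain ⟨a, rfl⟩ := List.length_eq_one_iff.mp hlen
    exact Set.mem_iUnion.mpr ⟨a, hxJ⟩
  have hKc : μ Kᶜ = 0 := by
    rw [measure_compl hKcomp.measurableSet (measure_ne_top μ K), hK1, measure_univ]
    simp
  have hfc : ∀ α : Finset (EuclideanSpace ℝ (Fin q)),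
      Continuous (fun x => infDist x (↑α : Set (EuclideanSpace ℝ (Fin q))) ^ r) :=
    fun α => (continuous_infDist_pt _).rpow_const (fun x => Or.inr hr.le)
  have hint : ∀ α : Finset (EuclideanSpace ℝ (Fin q)),
      Integrable (fun x => infDist x (↑α : Set (EuclideanSpace ℝ (Fin q))) ^ r) μ :=
    fun α => integrable_of_compact_carrier hKcomp hKc (hfc α)
  have hf0 : ∀ (α : Finset (EuclideanSpace ℝ (Fin q))) x,
      0 ≤ infDist x (↑α : Set (EuclideanSpace ℝ (Fin q))) ^ r :=
    fun α x => Real.rpow_nonneg infDist_nonneg r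
  -- facts about words in Λ_m
  have hJfacts : ∀ (m : ℕ) (σ : List (Fin N)), σ ∈ Lam P c r m →
      σ ≠ [] ∧ QM.Adm P σ ∧ val P c r σ < η ^ m
      ∧ Metric.diam (J σ) = QM.wprod c σ ∧ 0 < QM.wprod c σ ∧ 0 < QM.wprod P σ
      ∧ IsCompact (J σ) ∧ (J σ).Nonempty
      ∧ χm * QM.wprod P σ ≤ (μ (J σ)).toReal ∧ (μ (J σ)).toReal ≤ QM.wprod P σ := by
    intro m σ hσ
    obtain ⟨h0, hadm, _, h2⟩ := hσ
    have hcσ : 0 < QM.wprod c σ := wprodc_pos hc1 hadm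
    have hpσ : 0 < QM.wprod P σ := wprod_pos (fun _ _ h => h) hadm
    have hμσ : (μ (J σ)).toReal = χ (σ.head h0) * QM.wprod P σ := by
      rw [hμJ σ h0 hadm, ENNReal.toReal_ofReal (mul_nonneg (hχpos _).le hpσ.le)]
    refine ⟨h0, hadm, h2, J_diam_eq hJdiam1 hJdiam h0 hadm, hcσ, hpσ,
      (hJ σ h0 hadm).1, (hJ σ h0 hadm).2.1, ?_, ?_⟩
    · rw [hμσ]
      exact mul_le_mul_of_nonneg_right (hχmle _) hpσ.le
    · rw [hμσ]
      calc χ (σ.head h0) * QM.wprod P σ ≤ 1 * QM.wprod P σ :=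
            mul_le_mul_of_nonneg_right (hχle1 _) hpσ.le
        _ = QM.wprod P σ := one_mul _
  have hvlow : ∀ (m : ℕ), 1 ≤ m → ∀ σ ∈ Lam P c r m, η ^ (m+1) ≤ val P c r σ :=
    fun m hm σ hσ => Lam_val_lower hN hr hP0 hProw hPcard hc1 hm hσ
  -- the Finset versions
  set Γ : Finset (List (Fin N)) := (hfin j).toFinset with hΓdef
  have hmemΓ : ∀ σ, σ ∈ Γ ↔ σ ∈ Lam P c r j := fun σ => Set.Finite.mem_toFinset _
  have hφ : QM.phi P c r j = Γ.card := Set.ncard_eq_toFinset_card _ (hfin j)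
  have hΓne : Γ.Nonempty := by
    rw [Set.Finite.toFinset_nonempty]
    exact Lam_nonempty hN hr hPcard hc1 hj hP0 hProw
  have hΓ1 : (1:ℝ) ≤ (Γ.card : ℝ) := by
    have := Finset.card_pos.mpr hΓne
    exact_mod_cast this
  set S : ℝ := ∑ σ ∈ Γ, val P c r σ with hSdef
  have hfs : (∑ᶠ σ ∈ QM.Lambda P c r j, QM.wprod P σ * QM.wprod c σ ^ r) = S := by
    have h1 : QM.Lambda P c r j = ((↑Γ : Set (List (Fin N)))) := by
      rw [show QM.Lambda P c r j = Lam P c r j from rfl,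
        Set.Finite.coe_toFinset]
    rw [h1]
    exact finsum_mem_coe_finset _ _
  have hSub : S ≤ (Γ.card : ℝ) * η ^ j := by
    calc S ≤ Γ.card • (η ^ j) := Finset.sum_le_card_nsmul _ _ _
          (fun σ hσ => ((hJfacts j σ ((hmemΓ σ).mp hσ)).2.2.1).le)
      _ = (Γ.card : ℝ) * η ^ j := nsmul_eq_mul _ _
  have hSlb : (Γ.card : ℝ) * η ^ (j+1) ≤ S := by
    calc (Γ.card : ℝ) * η ^ (j+1) = Γ.card • (η ^ (j+1)) := (nsmul_eq_mul _ _).symm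
      _ ≤ S := Finset.card_nsmul_le_sum _ _ _
          (fun σ hσ => hvlow j hj σ ((hmemΓ σ).mp hσ))
  have hS0 : 0 < S :=
    lt_of_lt_of_le (by nlinarith [pow_pos hη0 (j+1)]) hSlb
  -- rpow helper
  have hrr : ∀ X : ℝ, 0 ≤ X → (X ^ (1/r)) ^ r = X := by
    intro X hX
    rw [← Real.rpow_mul hX, one_div, inv_mul_cancel₀ hr.ne', Real.rpow_one]
  -- UPPER BOUND: a good finite set of points
  have hupper : ∃ α : Finset (EuclideanSpace ℝ (Fin q)), α.Nonempty ∧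
      α.card ≤ QM.phi P c r j ∧
      (∫ x, infDist x (↑α : Set (EuclideanSpace ℝ (Fin q))) ^ r ∂μ) ≤ S := by
    set pt : List (Fin N) → EuclideanSpace ℝ (Fin q) := fun σ =>
      if h : (J σ).Nonempty then h.some else 0 with hptdef
    have hpt : ∀ σ ∈ Γ, pt σ ∈ J σ := by
      intro σ hσ
      have hne' : (J σ).Nonempty := (hJfacts j σ ((hmemΓ σ).mp hσ)).2.2.2.2.2.2.2.1
      simp only [hptdef, dif_pos hne']
      exact hne'.some_mem
    set α : Finset (EuclideanSpace ℝ (Fin q)) := Γ.image pt with hαdef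
    set f : EuclideanSpace ℝ (Fin q) → ℝ :=
      fun x => infDist x (↑α : Set (EuclideanSpace ℝ (Fin q))) ^ r with hfdef
    refine ⟨α, hΓne.image pt, by rw [hφ]; exact Finset.card_image_le, ?_⟩
    set U : Set (EuclideanSpace ℝ (Fin q)) := ⋃ σ ∈ (↑Γ : Set (List (Fin N))), J σ with hUdef
    have hUm : MeasurableSet U :=
      MeasurableSet.biUnion Γ.countable_toSet
        (fun σ hσ => (hJfacts j σ ((hmemΓ σ).mp hσ)).2.2.2.2.2.2.1.measurableSet)
    have hU1 : μ U = 1 := by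
      obtain ⟨k, hk⟩ := exists_pow_lt_of_lt_one (pow_pos hη0 j)
        (Theta_lt_one hN hr hP0 hProw hPcard hc1)
      refine le_antisymm prob_le_one ?_
      rw [← hAk1 k]
      apply measure_mono
      intro x hx
      rw [Set.mem_iUnion] at hx
      obtain ⟨σ, hx⟩ := hx
      rw [Set.mem_iUnion] at hx
      obtain ⟨⟨hlen, hadm⟩, hxJ⟩ := hx
      have hσ0 : σ ≠ [] := by
        intro h; rw [h] at hlen; simp at hlen
      have hval : val P c r σ < η ^ j := by
        have h1 := val_le_theta_pow hN hr hP0 hProw hPcard hc1 hσ0 hadm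
        rw [hlen] at h1
        simpa using lt_of_le_of_lt h1 hk
      obtain ⟨ρ, hρ, hρpre⟩ := exists_crossing hr hc1
        (pow_le_one₀ hη0.le hη1.le) hσ0 hadm hval
      exact Set.mem_biUnion (Finset.mem_coe.mpr ((hmemΓ ρ).mpr hρ))
        (J_mono hJsub hρ.1 hρpre hadm hxJ)
    have hUc : μ Uᶜ = 0 := by
      rw [measure_compl hUm (measure_ne_top μ U), hU1, measure_univ]
      simp
    have haeU : ∀ᵐ x ∂μ, x ∈ U := by
      rw [Filter.eventually_iff, mem_ae_iff]
      simpa using hUc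
    have hstep1 : (∫ x, f x ∂μ) = ∫ x, U.indicator f x ∂μ := by
      apply integral_congr_ae
      filter_upwards [haeU] with x hx
      rw [Set.indicator_of_mem hx]
    have hmeasJ : ∀ σ ∈ Γ, MeasurableSet (J σ) :=
      fun σ hσ => (hJfacts j σ ((hmemΓ σ).mp hσ)).2.2.2.2.2.2.1.measurableSet
    have hptwise : ∀ x, U.indicator f x ≤ ∑ σ ∈ Γ, (J σ).indicator f x := by
      intro x
      by_cases hx : x ∈ U
      · rw [Set.indicator_of_mem hx]
        obtain ⟨σ₀, hσ₀, hxσ₀⟩ := Set.mem_iUnion₂.mp hx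
        have h1 : (J σ₀).indicator f x = f x := Set.indicator_of_mem hxσ₀ f
        rw [← h1]
        exact Finset.single_le_sum
          (fun σ _ => Set.indicator_nonneg (fun y _ => hf0 α y) x)
          (Finset.mem_coe.mp hσ₀)
      · rw [Set.indicator_of_notMem hx]
        exact Finset.sum_nonneg
          (fun σ _ => Set.indicator_nonneg (fun y _ => hf0 α y) x)
    have hstep2 : (∫ x, U.indicator f x ∂μ) ≤ ∑ σ ∈ Γ, ∫ x in J σ, f x ∂μ := by
      have h1 : (∫ x, U.indicator f x ∂μ) ≤ ∫ x, (∑ σ ∈ Γ, (J σ).indicator f x) ∂μ :=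
        integral_mono ((hint α).indicator hUm)
          (integrable_finset_sum _ (fun σ hσ => (hint α).indicator (hmeasJ σ hσ))) hptwise
      rw [integral_finset_sum _ (fun σ hσ => (hint α).indicator (hmeasJ σ hσ))] at h1
      calc (∫ x, U.indicator f x ∂μ)
          ≤ ∑ σ ∈ Γ, ∫ x, (J σ).indicator f x ∂μ := h1
        _ = ∑ σ ∈ Γ, ∫ x in J σ, f x ∂μ :=
            Finset.sum_congr rfl (fun σ hσ => integral_indicator (hmeasJ σ hσ))
    have hstep3 : ∀ σ ∈ Γ, (∫ x in J σ, f x ∂μ) ≤ val P c r σ := by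
      intro σ hσ
      obtain ⟨h0, hadm, _, hdiam, hcσ, hpσ, hcomp, hJne, _, hμub⟩ :=
        hJfacts j σ ((hmemΓ σ).mp hσ)
      have hbound : ∀ x ∈ J σ, f x ≤ QM.wprod c σ ^ r := by
        intro x hx
        have h1 : infDist x (↑α : Set (EuclideanSpace ℝ (Fin q))) ≤ dist x (pt σ) :=
          infDist_le_dist_of_mem
            (Finset.mem_coe.mpr (Finset.mem_image_of_mem pt hσ))
        have h2 : dist x (pt σ) ≤ Metric.diam (J σ) :=
          dist_le_diam_of_mem hcomp.isBounded hx (hpt σ hσ)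
        rw [hdiam] at h2
        exact Real.rpow_le_rpow infDist_nonneg (le_trans h1 h2) hr.le
      have h3 : (∫ x in J σ, f x ∂μ) ≤ ∫ _x in J σ, QM.wprod c σ ^ r ∂μ :=
        setIntegral_mono_on (hint α).integrableOn
          (integrableOn_const (measure_ne_top μ _))
          (hmeasJ σ hσ) hbound
      rw [setIntegral_const, smul_eq_mul] at h3
      calc (∫ x in J σ, f x ∂μ) ≤ (μ (J σ)).toReal * QM.wprod c σ ^ r := h3
        _ ≤ QM.wprod P σ * QM.wprod c σ ^ r :=
            mul_le_mul_of_nonneg_right hμub (Real.rpow_nonneg hcσ.le r)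
        _ = val P c r σ := rfl
    calc (∫ x, f x ∂μ) = ∫ x, U.indicator f x ∂μ := hstep1
      _ ≤ ∑ σ ∈ Γ, ∫ x in J σ, f x ∂μ := hstep2
      _ ≤ ∑ σ ∈ Γ, val P c r σ := Finset.sum_le_sum hstep3
      _ = S := rfl
  -- LOWER BOUND
  have hlower : ∀ α : Finset (EuclideanSpace ℝ (Fin q)), α.Nonempty →
      α.card ≤ QM.phi P c r j →
      C₁ * S ≤ ∫ x, infDist x (↑α : Set (EuclideanSpace ℝ (Fin q))) ^ r ∂μ := by
    intro α hαne hαcard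
    set f : EuclideanSpace ℝ (Fin q) → ℝ :=
      fun x => infDist x (↑α : Set (EuclideanSpace ℝ (Fin q))) ^ r with hfdef
    set m := j + 3*N with hmdef
    set Γ3 : Finset (List (Fin N)) := (hfin m).toFinset with hΓ3def
    have hmemΓ3 : ∀ σ, σ ∈ Γ3 ↔ σ ∈ Lam P c r m := fun σ => Set.Finite.mem_toFinset _
    have hcard3 : 2^N * Γ.card ≤ Γ3.card := by
      have h1 := Lam_growth_pow hN hr hP0 hProw hPcard hc1 (j := j) hj N
      rwa [Set.ncard_eq_toFinset_card _ (hfin j),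
        Set.ncard_eq_toFinset_card _ (hfin (j + 3*N))] at h1
    -- separation of distinct cylinders with equal heads
    have hsepJ : ∀ σ ω, σ ∈ Lam P c r m → ω ∈ Lam P c r m → σ ≠ ω →
        σ.headI = ω.headI →
        ∀ x ∈ J σ, ∀ y ∈ J ω,
          t * max (QM.wprod c σ) (QM.wprod c ω) ≤ dist x y := by
      intro σ ω hσ hω hne hhead x hx y hy
      obtain ⟨hσ0, hσadm, _, hσdiam, _, _, _, _, _, _⟩ := hJfacts m σ hσ
      obtain ⟨hω0, hωadm, _, hωdiam, _, _, _, _, _, _⟩ := hJfacts m ω hω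
      have h1 : ¬ σ <+: ω := fun h =>
        hne (Lam_antichain hN hr hP0 hProw hPcard hc1 hσ hω h)
      have h2 : ¬ ω <+: σ := fun h =>
        hne (Lam_antichain hN hr hP0 hProw hPcard hc1 hω hσ h).symm
      have hhead' : σ.head hσ0 = ω.head hω0 := by
        rw [← hheadI σ hσ0, ← hheadI ω hω0]; exact hhead
      have := J_separation hJ hJsub ht0 hsept hσ0 hω0 hσadm hωadm h1 h2 hhead' x hx y hy
      rwa [hσdiam, hωdiam] at this
    -- bad words: those with a point of α nearby
    set Bad : Finset (List (Fin N)) := Γ3.filter (fun σ =>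
      ∃ a ∈ α, ∃ x ∈ J σ, dist a x < t/2 * QM.wprod c σ) with hBaddef
    have hBadcard : Bad.card ≤ N * α.card := by
      have hwit : ∀ σ ∈ Bad, ∃ a ∈ α, ∃ x ∈ J σ, dist a x < t/2 * QM.wprod c σ :=
        fun σ hσ => (Finset.mem_filter.mp hσ).2
      set g : List (Fin N) → EuclideanSpace ℝ (Fin q) × Fin N := fun σ =>
        (if h : ∃ a ∈ α, ∃ x ∈ J σ, dist a x < t/2 * QM.wprod c σ
          then h.choose else 0, σ.headI) with hgdef
      have hcard := Finset.card_le_card_of_injOn g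
        (s := Bad) (t := α ×ˢ (Finset.univ : Finset (Fin N))) ?_ ?_
      · calc Bad.card ≤ (α ×ˢ (Finset.univ : Finset (Fin N))).card := hcard
          _ = N * α.card := by
              rw [Finset.card_product, Finset.card_univ, Fintype.card_fin]
              ring
      · intro σ hσ
        have h := hwit σ hσ
        rw [Finset.mem_coe, Finset.mem_product]
        constructor
        · simp only [hgdef, dif_pos h]
          exact h.choose_spec.1
        · exact Finset.mem_univ _
      · rintro σ hσ ω hω heq
        by_contra hne
        have hσB : σ ∈ Bad := Finset.mem_coe.mp hσ
        have hωB : ω ∈ Bad := Finset.mem_coe.mp hω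
        have hσ3 : σ ∈ Lam P c r m := (hmemΓ3 σ).mp (Finset.mem_of_mem_filter σ hσB)
        have hω3 : ω ∈ Lam P c r m := (hmemΓ3 ω).mp (Finset.mem_of_mem_filter ω hωB)
        have hσw := hwit σ hσB
        have hωw := hwit ω hωB
        have heq1 : hσw.choose = hωw.choose := by
          have := congrArg Prod.fst heq
          simpa only [hgdef, dif_pos hσw, dif_pos hωw] using this
        have heq2 : σ.headI = ω.headI := congrArg Prod.snd heq
        obtain ⟨haα, x, hxJ, hxd⟩ := hσw.choose_spec
        obtain ⟨hbα, y, hyJ, hyd⟩ := hωw.choose_spec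
        rw [← heq1] at hyd
        have hsep2 := hsepJ σ ω hσ3 hω3 hne heq2 x hxJ y hyJ
        have hcσ : 0 < QM.wprod c σ := (hJfacts m σ hσ3).2.2.2.2.1
        have hcω : 0 < QM.wprod c ω := (hJfacts m ω hω3).2.2.2.2.1
        have htriangle : dist x y ≤ dist hσw.choose x + dist hσw.choose y :=
          dist_triangle_left x y _
        have hmax : t/2 * QM.wprod c σ + t/2 * QM.wprod c ω ≤
            t * max (QM.wprod c σ) (QM.wprod c ω) := by
          rcases le_total (QM.wprod c σ) (QM.wprod c ω) with h | h
          · rw [max_eq_right h]; nlinarith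
          · rw [max_eq_left h]; nlinarith
        linarith
    set Good : Finset (List (Fin N)) := Γ3 \ Bad with hGooddef
    have hGoodcard : Γ.card ≤ Good.card := by
      have h1 : Γ3.card - Bad.card ≤ Good.card := Finset.le_card_sdiff _ _
      have h2 : N + 1 ≤ 2^N := Nat.lt_two_pow_self
      have h3 : α.card ≤ Γ.card := by rwa [hφ] at hαcard
      have h4 : Bad.card ≤ N * Γ.card :=
        le_trans hBadcard (Nat.mul_le_mul_left N h3)
      have h5 : (N+1) * Γ.card ≤ Γ3.card :=
        le_trans (Nat.mul_le_mul_right _ h2) hcard3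
      have h6 : N * Γ.card + Γ.card ≤ Γ3.card := by
        rw [← Nat.succ_mul]; exact h5
      generalize hB : N * Γ.card = B at h4 h6
      omega
    have hGoodfacts : ∀ σ ∈ Good, σ ∈ Lam P c r m ∧
        ∀ x ∈ J σ, (t/2 * QM.wprod c σ) ^ r ≤ f x := by
      intro σ hσ
      obtain ⟨hσ3, hσnb⟩ := Finset.mem_sdiff.mp hσ
      have hσ3' : σ ∈ Lam P c r m := (hmemΓ3 σ).mp hσ3
      have hcσ : 0 < QM.wprod c σ := (hJfacts m σ hσ3').2.2.2.2.1
      refine ⟨hσ3', ?_⟩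
      intro x hx
      have hnb : ¬ ∃ a ∈ α, ∃ x ∈ J σ, dist a x < t/2 * QM.wprod c σ := by
        intro h
        exact hσnb (Finset.mem_filter.mpr ⟨hσ3, h⟩)
      push_neg at hnb
      have hlow : t/2 * QM.wprod c σ ≤ infDist x (↑α : Set (EuclideanSpace ℝ (Fin q))) := by
        by_contra h
        push_neg at h
        obtain ⟨y, hyα, hyd⟩ := (infDist_lt_iff (by
          exact (Finset.coe_nonempty.mpr hαne))).mp h
        have := hnb y (Finset.mem_coe.mp hyα) x hx
        rw [dist_comm] at hyd
        linarith
      exact Real.rpow_le_rpow (mul_nonneg ht2.le hcσ.le) hlow hr.le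
    -- pointwise: the good cylinders cover each point at most N times
    have hsum_le : ∀ x, (∑ σ ∈ Good, (J σ).indicator f x) ≤ (N:ℝ) * f x := by
      intro x
      have h1 : (∑ σ ∈ Good, (J σ).indicator f x) =
          ∑ σ ∈ Good.filter (fun σ => x ∈ J σ), f x := by
        rw [Finset.sum_filter]
        exact Finset.sum_congr rfl (fun σ _ => by
          by_cases h : x ∈ J σ <;> simp [Set.indicator_apply, h])
      have h2 : (Good.filter (fun σ => x ∈ J σ)).card ≤ N := by
        have := Finset.card_le_card_of_injOn (fun σ => σ.headI)
          (s := Good.filter (fun σ => x ∈ J σ)) (t := Finset.univ)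
          (fun _ _ => Finset.mem_univ _) ?_
        · simpa [Finset.card_univ] using this
        · rintro σ hσ ω hω heq
          by_contra hne
          have hσm := Finset.mem_filter.mp (Finset.mem_coe.mp hσ)
          have hωm := Finset.mem_filter.mp (Finset.mem_coe.mp hω)
          have hσ3 := (hGoodfacts σ hσm.1).1
          have hω3 := (hGoodfacts ω hωm.1).1
          have hcσ : 0 < QM.wprod c σ := (hJfacts m σ hσ3).2.2.2.2.1
          have hcω : 0 < QM.wprod c ω := (hJfacts m ω hω3).2.2.2.2.1
          have := hsepJ σ ω hσ3 hω3 hne heq x hσm.2 x hωm.2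
          rw [dist_self] at this
          have hmaxpos : 0 < max (QM.wprod c σ) (QM.wprod c ω) :=
            lt_max_of_lt_left hcσ
          nlinarith
      rw [h1, Finset.sum_const, nsmul_eq_mul]
      exact mul_le_mul_of_nonneg_right (by exact_mod_cast h2) (hf0 α x)
    have hmeasJ3 : ∀ σ ∈ Good, MeasurableSet (J σ) :=
      fun σ hσ => ((hJfacts m σ (hGoodfacts σ hσ).1).2.2.2.2.2.2.1).measurableSet
    have hintsum : (∑ σ ∈ Good, ∫ x in J σ, f x ∂μ) ≤ (N:ℝ) * ∫ x, f x ∂μ := by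
      have h1 : (∑ σ ∈ Good, ∫ x in J σ, f x ∂μ) =
          ∫ x, (∑ σ ∈ Good, (J σ).indicator f x) ∂μ := by
        rw [integral_finset_sum _ (fun σ hσ => (hint α).indicator (hmeasJ3 σ hσ))]
        exact Finset.sum_congr rfl
          (fun σ hσ => (integral_indicator (hmeasJ3 σ hσ)).symm)
      rw [h1]
      calc (∫ x, (∑ σ ∈ Good, (J σ).indicator f x) ∂μ)
          ≤ ∫ x, (N:ℝ) * f x ∂μ :=
            integral_mono
              (integrable_finset_sum _ (fun σ hσ => (hint α).indicator (hmeasJ3 σ hσ)))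
              ((hint α).const_mul _) hsum_le
        _ = (N:ℝ) * ∫ x, f x ∂μ := integral_const_mul _ _
    have hintJ : ∀ σ ∈ Good, (t/2) ^ r * (χm * val P c r σ) ≤ ∫ x in J σ, f x ∂μ := by
      intro σ hσ
      obtain ⟨hσ3, hbnd⟩ := hGoodfacts σ hσ
      obtain ⟨h0, hadm, _, hdiam, hcσ, hpσ, hcomp, _, hμlb, _⟩ := hJfacts m σ hσ3
      have h1 : (t/2 * QM.wprod c σ) ^ r * (μ (J σ)).toReal ≤ ∫ x in J σ, f x ∂μ :=
        setIntegral_ge_of_const_le_real (hmeasJ3 σ hσ) (measure_ne_top μ _) hbnd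
          (hint α).integrableOn
      have h2 : (t/2 * QM.wprod c σ) ^ r = (t/2) ^ r * QM.wprod c σ ^ r :=
        Real.mul_rpow ht2.le hcσ.le
      calc (t/2) ^ r * (χm * val P c r σ)
          = (t/2) ^ r * QM.wprod c σ ^ r * (χm * QM.wprod P σ) := by
            simp only [val]; ring
        _ ≤ (t/2) ^ r * QM.wprod c σ ^ r * (μ (J σ)).toReal := by
            apply mul_le_mul_of_nonneg_left hμlb
            positivity
        _ = (t/2 * QM.wprod c σ) ^ r * (μ (J σ)).toReal := by rw [h2]
        _ ≤ ∫ x in J σ, f x ∂μ := h1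
    have hsumlow : (t/2) ^ r * (χm * ((Γ.card : ℝ) * η ^ (m+1))) ≤
        ∑ σ ∈ Good, ∫ x in J σ, f x ∂μ := by
      have h1 : ∀ σ ∈ Good, (t/2) ^ r * (χm * η ^ (m+1)) ≤ ∫ x in J σ, f x ∂μ := by
        intro σ hσ
        refine le_trans ?_ (hintJ σ hσ)
        have := hvlow m (by omega) σ (hGoodfacts σ hσ).1
        have hv0 : 0 ≤ (t/2) ^ r * χm := by positivity
        nlinarith
      calc (t/2) ^ r * (χm * ((Γ.card : ℝ) * η ^ (m+1)))
          ≤ (t/2) ^ r * (χm * ((Good.card : ℝ) * η ^ (m+1))) := by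
            have hle : (Γ.card : ℝ) ≤ (Good.card : ℝ) := by exact_mod_cast hGoodcard
            have h9 : (0:ℝ) ≤ η ^ (m+1) := (pow_pos hη0 _).le
            exact mul_le_mul_of_nonneg_left
              (mul_le_mul_of_nonneg_left (mul_le_mul_of_nonneg_right hle h9) hχm0.le)
              htr0.le
        _ = Good.card • ((t/2) ^ r * (χm * η ^ (m+1))) := by
            rw [nsmul_eq_mul]; ring
        _ ≤ ∑ σ ∈ Good, ∫ x in J σ, f x ∂μ := Finset.card_nsmul_le_sum _ _ _ h1
    -- combine
    have hfinal : (t/2) ^ r * (χm * (S * η ^ (3*N+1))) ≤ (N:ℝ) * ∫ x, f x ∂μ := by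
      refine le_trans ?_ (le_trans hsumlow hintsum)
      have hexp : η ^ (m+1) = η ^ j * η ^ (3*N+1) := by
        rw [hmdef, ← pow_add]
        ring
      have h1 : S * η ^ (3*N+1) ≤ (Γ.card : ℝ) * η ^ (m+1) := by
        rw [hexp, ← mul_assoc]
        apply mul_le_mul_of_nonneg_right hSub (pow_pos hη0 _).le
      exact mul_le_mul_of_nonneg_left
        (mul_le_mul_of_nonneg_left h1 hχm0.le) htr0.le
    have hNR : (0:ℝ) < (N:ℝ) := by exact_mod_cast hNpos
    rw [hC₁def]
    rw [div_mul_eq_mul_div, div_le_iff₀ hNR]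
    calc χm * (t/2) ^ r * η ^ (3*N+1) * S = (t/2) ^ r * (χm * (S * η ^ (3*N+1))) := by ring
      _ ≤ (N:ℝ) * ∫ x, f x ∂μ := hfinal
      _ = (∫ x, f x ∂μ) * N := by ring
  -- CONCLUSION
  obtain ⟨α₀, hα₀ne, hα₀card, hα₀int⟩ := hupper
  set Qs : Set ℝ := {e : ℝ | ∃ β : Finset (EuclideanSpace ℝ (Fin q)), β.Nonempty ∧
    β.card ≤ QM.phi P c r j ∧
    e = (∫ x, infDist x (↑β : Set (EuclideanSpace ℝ (Fin q))) ^ r ∂μ) ^ (1/r)} with hQsdef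
  have hquant : QM.quantErr μ r (QM.phi P c r j) = sInf Qs := rfl
  have hQne : Qs.Nonempty := ⟨_, α₀, hα₀ne, hα₀card, rfl⟩
  have hQnn : ∀ e ∈ Qs, 0 ≤ e := by
    rintro e ⟨β, h1, h2, rfl⟩
    exact Real.rpow_nonneg (integral_nonneg (hf0 β)) _
  have hbdd : BddBelow Qs := ⟨0, fun e he => hQnn e he⟩
  have hq0 : 0 ≤ sInf Qs := le_csInf hQne hQnn
  have hCS0 : 0 ≤ C₁ * S := by positivity
  have hq_ge : (C₁ * S) ^ (1/r) ≤ sInf Qs := by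
    apply le_csInf hQne
    rintro e ⟨β, h1, h2, rfl⟩
    exact Real.rpow_le_rpow hCS0 (hlower β h1 h2) (by positivity)
  have hq_le : sInf Qs ≤ S ^ (1/r) := by
    refine le_trans (csInf_le hbdd ⟨α₀, hα₀ne, hα₀card, rfl⟩) ?_
    exact Real.rpow_le_rpow (integral_nonneg (hf0 α₀)) hα₀int (by positivity)
  constructor
  · rw [hfs, hquant]
    calc C₁ * S = ((C₁ * S) ^ (1/r)) ^ r := (hrr _ hCS0).symm
      _ ≤ (sInf Qs) ^ r :=
          Real.rpow_le_rpow (Real.rpow_nonneg hCS0 _) hq_ge hr.le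
  · rw [hfs, hquant, one_mul]
    calc (sInf Qs) ^ r ≤ (S ^ (1/r)) ^ r := Real.rpow_le_rpow hq0 hq_le hr.le
      _ = S := hrr _ hS0.le

end MainAux

open QM in
theorem quantErr_comparable_to_sum
    {q : ℕ}
    {N : ℕ} (hN : 2 ≤ N)
    (P c : Matrix (Fin N) (Fin N) ℝ) (r : ℝ) (hr : 0 < r)
    (hP0 : ∀ i j, 0 ≤ P i j)
    (hProw : ∀ i, ∑ j, P i j = 1)
    (hPcard : ∀ i : Fin N, 2 ≤ {j : Fin N | 0 < P i j}.ncard)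
    (hc1 : ∀ i j, 0 < P i j → 0 < c i j ∧ c i j < 1)
    (hc0 : ∀ i j, P i j = 0 → c i j = 0)
    (J : List (Fin N) → Set (EuclideanSpace ℝ (Fin q)))
    (hJ : ∀ σ : List (Fin N), σ ≠ [] → QM.Adm P σ →
      IsCompact (J σ) ∧ (J σ).Nonempty ∧ J σ = closure (interior (J σ)))
    (hJdiam1 : ∀ i : Fin N, Metric.diam (J [i]) = 1)
    (hJsub : ∀ (σ : List (Fin N)) (a : Fin N), σ ≠ [] → QM.Adm P (σ ++ [a]) →
      J (σ ++ [a]) ⊆ J σ)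
    (hJdisj : ∀ (σ : List (Fin N)) (a b : Fin N), σ ≠ [] → a ≠ b →
      QM.Adm P (σ ++ [a]) → QM.Adm P (σ ++ [b]) →
      Disjoint (interior (J (σ ++ [a]))) (interior (J (σ ++ [b]))))
    (hJdiam : ∀ (σ : List (Fin N)) (a : Fin N) (h : σ ≠ []), QM.Adm P (σ ++ [a]) →
      Metric.diam (J (σ ++ [a])) = c (σ.getLast h) a * Metric.diam (J σ))
    (hsep : ∃ t : ℝ, 0 < t ∧ t < 1 ∧ ∀ (σ : List (Fin N)) (a b : Fin N), σ ≠ [] → a ≠ b →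
      QM.Adm P (σ ++ [a]) → QM.Adm P (σ ++ [b]) →
      ∀ x ∈ J (σ ++ [a]), ∀ y ∈ J (σ ++ [b]),
        t * max (Metric.diam (J (σ ++ [a]))) (Metric.diam (J (σ ++ [b]))) ≤ dist x y)
    (χ : Fin N → ℝ) (hχpos : ∀ i, 0 < χ i) (hχsum : ∑ i, χ i = 1)
    (μ : Measure (EuclideanSpace ℝ (Fin q))) (hprob : IsProbabilityMeasure μ)
    (hμE : μ (⋂ k : ℕ, ⋃ (σ : List (Fin N)) (_ : σ.length = k + 1 ∧ QM.Adm P σ), J σ) = 1)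
    (hμJ : ∀ (σ : List (Fin N)) (h : σ ≠ []), QM.Adm P σ →
      μ (J σ) = ENNReal.ofReal (χ (σ.head h) * QM.wprod P σ))
    :
    ∃ C₁ C₂ : ℝ, 0 < C₁ ∧ C₁ ≤ C₂ ∧ ∃ j₀ : ℕ, ∀ j : ℕ, j₀ ≤ j →
      C₁ * (∑ᶠ σ ∈ QM.Lambda P c r j, QM.wprod P σ * QM.wprod c σ ^ r) ≤
          QM.quantErr μ r (QM.phi P c r j) ^ r ∧
      QM.quantErr μ r (QM.phi P c r j) ^ r ≤
          C₂ * (∑ᶠ σ ∈ QM.Lambda P c r j, QM.wprod P σ * QM.wprod c σ ^ r) :=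
  quantErr_comparable_to_sum_aux hN P c r hr hP0 hProw hPcard hc1 hc0 J hJ hJdiam1 hJsub
    hJdisj hJdiam hsep χ hχpos hχsum μ hprob hμE hμJ
end
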